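/- arXiv:2008.04971 — 2 statements merged into one kernel-verified Lean document; each statement's English description precedes it below -/
import Mathlib

section
/- There is exactly one power series σ ∈ F₂[[t]] with σ ≡ t (mod t²) satisfying the equation (1+t)³σ³ + (t³+t)σ² + (t³+t+1)σ + t³ + t = 0 in F₂[[t]]. This σ satisfies σ = t + t² + t⁴ + t⁵ + O(t⁶), has compositional order 4 (σ^{∘4} = t and σ^{∘2} ≠ t), and has lower break sequence (1,3), i.e., d(σ) = 1 and d(σ^{∘2}) = 3. -/
open PowerSeries

abbrev F2 := ZMod 2

/-- Composition of power series `σ ∘ τ` (substitution of `τ` into `σ`), valid when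
`τ` has zero constant coefficient. -/
noncomputable def ngComp (σ τ : PowerSeries F2) : PowerSeries F2 :=
  PowerSeries.mk fun k =>
    ∑ n ∈ Finset.range (k + 1), PowerSeries.coeff (R := F2) n σ * PowerSeries.coeff (R := F2) k (τ ^ n)

/-- `ngIter σ n = σ^{∘n}`, the `n`-fold compositional iterate. -/
noncomputable def ngIter (σ : PowerSeries F2) : ℕ → PowerSeries F2
  | 0 => PowerSeries.X
  | n + 1 => ngComp σ (ngIter σ n)

/-- Membership in the Nottingham group: `σ ≡ t (mod t²)`. -/
def IsNott (σ : PowerSeries F2) : Prop :=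
  PowerSeries.coeff (R := F2) 0 σ = 0 ∧ PowerSeries.coeff (R := F2) 1 σ = 1

/-- `σ` has compositional order `n`. -/
def NGOrder (σ : PowerSeries F2) (n : ℕ) : Prop :=
  ngIter σ n = PowerSeries.X ∧ ∀ m : ℕ, 0 < m → m < n → ngIter σ m ≠ PowerSeries.X

/-- `σ` has depth `m`, i.e. `ord_t (σ - t) = m + 1`. -/
def HasDepth (σ : PowerSeries F2) (m : ℕ) : Prop :=
  (∀ i < m + 1, PowerSeries.coeff (R := F2) i (σ - PowerSeries.X) = 0) ∧
    PowerSeries.coeff (R := F2) (m + 1) (σ - PowerSeries.X) ≠ 0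

/-- Conjugacy in the Nottingham group. -/
def NGConj (σ τ : PowerSeries F2) : Prop :=
  ∃ ψ : PowerSeries F2, IsNott ψ ∧ ngComp σ ψ = ngComp ψ τ


open Finset

namespace NG

variable {σ τ a b c : PowerSeries F2}

lemma coeff_pow_eq_zero (hτ : constantCoeff (R := F2) τ = 0) {k n : ℕ} (h : k < n) :
    coeff (R := F2) k (τ ^ n) = 0 :=
  PowerSeries.X_pow_dvd_iff.mp (pow_dvd_pow_of_dvd (PowerSeries.X_dvd_iff.mpr hτ) n) k h

lemma coeff_ngComp (k : ℕ) :
    coeff (R := F2) k (ngComp σ τ) = ∑ n ∈ Finset.range (k+1), coeff (R := F2) n σ * coeff (R := F2) k (τ ^ n) := by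
  rw [ngComp, coeff_mk]

lemma coeff_ngComp_ext (hτ : constantCoeff (R := F2) τ = 0) {k m : ℕ} (hkm : k < m) :
    coeff (R := F2) k (ngComp σ τ) = ∑ n ∈ Finset.range m, coeff (R := F2) n σ * coeff (R := F2) k (τ ^ n) := by
  rw [coeff_ngComp]
  refine Finset.sum_subset (Finset.range_subset_range.mpr hkm) ?_
  intro x _ hx
  rw [coeff_pow_eq_zero hτ (by simpa using hx), mul_zero]

lemma coeff_ngComp_coe (hτ : constantCoeff (R := F2) τ = 0) (p : Polynomial F2) (k : ℕ) :
    coeff (R := F2) k (ngComp (↑p : PowerSeries F2) τ) = coeff (R := F2) k (p.eval₂ (C (R := F2)) τ) := by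
  have h1 : p.natDegree < k + p.natDegree + 1 := by omega
  rw [Polynomial.eval₂_eq_sum_range' (PowerSeries.C (R := F2)) h1 τ, map_sum,
    coeff_ngComp_ext hτ (show k < k + p.natDegree + 1 by omega)]
  refine Finset.sum_congr rfl ?_
  intro i _
  rw [PowerSeries.coeff_C_mul, Polynomial.coeff_coe]

lemma coeff_ngComp_trunc (hτ : constantCoeff (R := F2) τ = 0) {k m : ℕ} (hkm : k < m) :
    coeff (R := F2) k (ngComp σ τ) = coeff (R := F2) k ((trunc m σ).eval₂ (C (R := F2)) τ) := by
  rw [eval₂_trunc_eq_sum_range, map_sum, coeff_ngComp_ext hτ hkm]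
  refine Finset.sum_congr rfl ?_
  intro i _
  rw [PowerSeries.coeff_C_mul]

lemma ngComp_mul (hτ : constantCoeff (R := F2) τ = 0) :
    ngComp (a * b) τ = ngComp a τ * ngComp b τ := by
  ext k
  rw [coeff_ngComp_trunc hτ (Nat.lt_succ_self k), ← trunc_trunc_mul_trunc,
    ← coeff_ngComp_trunc (σ := ((trunc (k+1) a : PowerSeries F2) * (trunc (k+1) b : PowerSeries F2)))
      hτ (Nat.lt_succ_self k),
    ← Polynomial.coe_mul, coeff_ngComp_coe hτ, Polynomial.eval₂_mul, PowerSeries.coeff_mul,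
    PowerSeries.coeff_mul]
  refine Finset.sum_congr rfl ?_
  intro p hp
  rw [Finset.HasAntidiagonal.mem_antidiagonal] at hp
  rw [← coeff_ngComp_trunc hτ (show p.1 < k + 1 by omega),
    ← coeff_ngComp_trunc hτ (show p.2 < k + 1 by omega)]

lemma ngComp_one : ngComp 1 τ = 1 := by
  ext k
  rw [coeff_ngComp]
  simp [PowerSeries.coeff_one]

lemma ngComp_add : ngComp (a + b) τ = ngComp a τ + ngComp b τ := by
  ext k
  rw [map_add, coeff_ngComp, coeff_ngComp, coeff_ngComp, ← Finset.sum_add_distrib]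
  exact Finset.sum_congr rfl fun i _ => by rw [map_add, add_mul]

lemma ngComp_zero : ngComp 0 τ = 0 := by
  ext k; rw [coeff_ngComp]; simp

noncomputable def ngHom (τ : PowerSeries F2) (hτ : constantCoeff (R := F2) τ = 0) :
    PowerSeries F2 →+* PowerSeries F2 where
  toFun σ := ngComp σ τ
  map_one' := ngComp_one
  map_mul' _ _ := ngComp_mul hτ
  map_zero' := ngComp_zero
  map_add' _ _ := ngComp_add

@[simp] lemma ngHom_apply (hτ : constantCoeff (R := F2) τ = 0) : ngHom τ hτ σ = ngComp σ τ := rfl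

lemma ngComp_pow (hτ : constantCoeff (R := F2) τ = 0) (n : ℕ) :
    ngComp (a ^ n) τ = (ngComp a τ) ^ n := by
  simpa using map_pow (ngHom τ hτ) a n

lemma ngComp_X (hτ : constantCoeff (R := F2) τ = 0) : ngComp X τ = τ := by
  ext k
  rw [coeff_ngComp]
  match k with
  | 0 => simpa [PowerSeries.coeff_X] using hτ.symm
  | (k+1) =>
    rw [Finset.sum_eq_single 1 (fun n _ hn => by simp [PowerSeries.coeff_X, hn])
      (fun h => by simp at h)]
    simp
lemma ngComp_X_right : ngComp σ X = σ := by
  ext k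
  rw [coeff_ngComp, Finset.sum_eq_single k
    (fun n _ hn => by simp [PowerSeries.coeff_X_pow, Ne.symm hn]) (fun h => by simp at h)]
  simp [PowerSeries.coeff_X_pow]

lemma constantCoeff_ngComp : coeff (R := F2) 0 (ngComp σ τ) = coeff (R := F2) 0 σ := by
  rw [coeff_ngComp]; simp

lemma coeff_one_ngComp : coeff (R := F2) 1 (ngComp σ τ) = coeff (R := F2) 1 σ * coeff (R := F2) 1 τ := by
  rw [coeff_ngComp, Finset.sum_range_succ, Finset.sum_range_one]
  simp

lemma ngComp_assoc (hb : constantCoeff (R := F2) b = 0) (hc : constantCoeff (R := F2) c = 0) :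
    ngComp (ngComp a b) c = ngComp a (ngComp b c) := by
  ext k
  rw [coeff_ngComp, coeff_ngComp]
  calc ∑ m ∈ Finset.range (k+1), coeff (R := F2) m (ngComp a b) * coeff (R := F2) k (c ^ m)
      = ∑ m ∈ Finset.range (k+1), ∑ n ∈ Finset.range (k+1),
          coeff (R := F2) n a * coeff (R := F2) m (b ^ n) * coeff (R := F2) k (c ^ m) := by
        refine Finset.sum_congr rfl fun m hm => ?_
        rw [coeff_ngComp_ext hb (Finset.mem_range.mp hm), Finset.sum_mul]
    _ = ∑ n ∈ Finset.range (k+1), coeff (R := F2) n a *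
          ∑ m ∈ Finset.range (k+1), coeff (R := F2) m (b ^ n) * coeff (R := F2) k (c ^ m) := by
        rw [Finset.sum_comm]
        refine Finset.sum_congr rfl fun n _ => ?_
        rw [Finset.mul_sum]
        exact Finset.sum_congr rfl fun m _ => by ring
    _ = ∑ n ∈ Finset.range (k+1), coeff (R := F2) n a * coeff (R := F2) k ((ngComp b c) ^ n) := by
        refine Finset.sum_congr rfl fun n _ => ?_
        rw [← coeff_ngComp_ext hc (Nat.lt_succ_self k), ← ngComp_pow hc]


lemma mem_span_X_pow {f : PowerSeries F2} {n : ℕ} :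
    f ∈ (Ideal.span {(X : PowerSeries F2)}) ^ n ↔ ∀ k < n, coeff (R := F2) k f = 0 := by
  rw [Ideal.span_singleton_pow, Ideal.mem_span_singleton, PowerSeries.X_pow_dvd_iff]

lemma smul_top_eq (n : ℕ) :
    ((Ideal.span {(X : PowerSeries F2)}) ^ n • ⊤ : Submodule (PowerSeries F2) (PowerSeries F2))
      = ((Ideal.span {(X : PowerSeries F2)}) ^ n : Ideal (PowerSeries F2)) := by
  rw [smul_eq_mul, Ideal.mul_top]

instance : IsAdicComplete (Ideal.span {(X : PowerSeries F2)}) (PowerSeries F2) where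
  haus' := by
    intro x hx
    ext k
    have := hx (k + 1)
    rw [SModEq.sub_mem, sub_zero, smul_top_eq, mem_span_X_pow] at this
    simpa using this k (Nat.lt_succ_self k)
  prec' := by
    intro f hf
    refine ⟨PowerSeries.mk fun k => coeff (R := F2) k (f (k + 1)), fun n => ?_⟩
    rw [SModEq.sub_mem, smul_top_eq, mem_span_X_pow]
    intro k hk
    have h1 := hf (show k + 1 ≤ n by omega)
    rw [SModEq.sub_mem, smul_top_eq, mem_span_X_pow] at h1
    have h2 := h1 k (Nat.lt_succ_self k)
    rw [map_sub] at h2 ⊢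
    rw [coeff_mk]
    linear_combination -h2

lemma exists_root : ∃ a : PowerSeries F2, constantCoeff (R := F2) a = 0 ∧
    (1 + PowerSeries.X) ^ 3 * a ^ 3 + (PowerSeries.X ^ 3 + PowerSeries.X) * a ^ 2 +
      (PowerSeries.X ^ 3 + PowerSeries.X + 1) * a + PowerSeries.X ^ 3 + PowerSeries.X = 0 := by
  classical
  have hu : IsUnit ((1 : PowerSeries F2) + PowerSeries.X) := by
    rw [PowerSeries.isUnit_iff_constantCoeff]
    simp
  obtain ⟨u, hu_eq⟩ := hu
  set v : PowerSeries F2 := ↑u⁻¹ with hv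
  have hv1 : ((1 : PowerSeries F2) + PowerSeries.X) * v = 1 := by
    rw [← hu_eq, hv]; exact_mod_cast u.mul_inv
  have hv0 : constantCoeff (R := F2) v = 1 := by
    have := congrArg (constantCoeff (R := F2)) hv1
    simp only [map_mul, map_add, map_one, constantCoeff_X, add_zero, one_mul] at this
    exact this
  set c2 : PowerSeries F2 := v ^ 3 * (PowerSeries.X ^ 3 + PowerSeries.X) with hc2
  set c1 : PowerSeries F2 := v ^ 3 * (PowerSeries.X ^ 3 + PowerSeries.X + 1) with hc1
  set f : Polynomial (PowerSeries F2) :=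
    Polynomial.X ^ 3 + (Polynomial.C c2 * Polynomial.X ^ 2 + Polynomial.C c1 * Polynomial.X
      + Polynomial.C c2) with hf
  have hmonic : f.Monic := by
    apply Polynomial.monic_X_pow_add
    apply lt_of_le_of_lt (Polynomial.degree_add_le _ _)
    apply max_lt
    · apply lt_of_le_of_lt (Polynomial.degree_add_le _ _)
      apply max_lt
      · exact lt_of_le_of_lt (Polynomial.degree_C_mul_X_pow_le _ _)
          (by norm_num : (2 : WithBot ℕ) < 3)
      · exact lt_of_le_of_lt (Polynomial.degree_C_mul_X_le _)
          (by norm_num : (1 : WithBot ℕ) < 3)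
    · exact lt_of_le_of_lt (Polynomial.degree_C_le) (by norm_num)
  have heval : f.eval PowerSeries.X ∈ Ideal.span {(PowerSeries.X : PowerSeries F2)} := by
    rw [Ideal.mem_span_singleton]
    refine ⟨PowerSeries.X ^ 2 + c2 * PowerSeries.X + c1 + v ^ 3 * (PowerSeries.X ^ 2 + 1), ?_⟩
    simp only [hf, Polynomial.eval_add, Polynomial.eval_mul, Polynomial.eval_pow,
      Polynomial.eval_C, Polynomial.eval_X, hc1, hc2]
    ring
  have hderiv : IsUnit (Ideal.Quotient.mk (Ideal.span {(PowerSeries.X : PowerSeries F2)})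
      (f.derivative.eval PowerSeries.X)) := by
    have hd : f.derivative.eval PowerSeries.X - 1 ∈ Ideal.span {(PowerSeries.X : PowerSeries F2)} := by
      rw [Ideal.mem_span_singleton, PowerSeries.X_dvd_iff]
      simp [hf, hc1, hc2, hv0, Polynomial.derivative_add, Polynomial.derivative_mul,
        Polynomial.derivative_C, Polynomial.derivative_X_pow, Polynomial.derivative_X,
        Polynomial.derivative_pow]
    rw [show Ideal.Quotient.mk (Ideal.span {(PowerSeries.X : PowerSeries F2)}) (f.derivative.eval PowerSeries.X)
        = Ideal.Quotient.mk (Ideal.span {(PowerSeries.X : PowerSeries F2)}) 1 from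
      Ideal.Quotient.eq.mpr hd]
    simpa using isUnit_one
  have H := (IsAdicComplete.henselianRing (PowerSeries F2)
    (Ideal.span {(PowerSeries.X : PowerSeries F2)})).is_henselian f hmonic PowerSeries.X heval hderiv
  obtain ⟨a, hroot, hsub⟩ := H
  have ha0 : constantCoeff (R := F2) a = 0 := by
    rw [Ideal.mem_span_singleton] at hsub
    have := (PowerSeries.X_dvd_iff).mp hsub
    simpa using this
  refine ⟨a, ha0, ?_⟩
  have hroot' : a ^ 3 + c2 * a ^ 2 + c1 * a + c2 = 0 := by
    have h0 := hroot
    simp only [Polynomial.IsRoot, hf, Polynomial.eval_add, Polynomial.eval_mul,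
      Polynomial.eval_pow, Polynomial.eval_C, Polynomial.eval_X] at h0
    linear_combination h0
  rw [hc1, hc2] at hroot'
  linear_combination ((1+PowerSeries.X)^3) * hroot' - ((PowerSeries.X^3+PowerSeries.X)*a^2 + (PowerSeries.X^3+PowerSeries.X+1)*a + (PowerSeries.X^3+PowerSeries.X)) *
    ((((1:PowerSeries F2)+PowerSeries.X)*v)^2 + ((1+PowerSeries.X)*v) + 1) * hv1


lemma two_eq_zero : (2 : PowerSeries F2) = 0 := by
  have : (2 : PowerSeries F2) = PowerSeries.C (R := F2) 2 := by
    rw [map_ofNat]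
  rw [this, show (2 : F2) = 0 by decide, map_zero]

lemma twoF : (2 : F2) = 0 := by decide

lemma expand_eqn {σ : PowerSeries F2}
    (h : (1+X)^3*σ^3 + (X^3+X)*σ^2 + (X^3+X+1)*σ + X^3 + X = 0) :
    σ*σ*σ + X*(σ*σ*σ) + X^2*(σ*σ*σ) + X^3*(σ*σ*σ) + X*(σ*σ) + X^3*(σ*σ)
      + σ + X*σ + X^3*σ + X + X^3 = 0 := by
  linear_combination h - (X*σ^3 + X^2*σ^3) * two_eq_zero

lemma root_coeff_one {σ : PowerSeries F2} (h0 : coeff (R := F2) 0 σ = 0)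
    (h : (1+X)^3*σ^3 + (X^3+X)*σ^2 + (X^3+X+1)*σ + X^3 + X = 0) :
    coeff (R := F2) 1 σ = 1 := by
  have e := congrArg (coeff (R := F2) 1) (expand_eqn h)
  simp only [map_add, map_zero, PowerSeries.coeff_mul,
    Finset.Nat.sum_antidiagonal_eq_sum_range_succ_mk, Finset.sum_range_succ,
    Finset.sum_range_zero, PowerSeries.coeff_X, PowerSeries.coeff_X_pow, h0] at e
  norm_num at e
  linear_combination e - twoF

lemma root_unique {a b : PowerSeries F2}
    (ha0 : coeff (R := F2) 0 a = 0) (hb0 : coeff (R := F2) 0 b = 0)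
    (ha : (1+X)^3*a^3 + (X^3+X)*a^2 + (X^3+X+1)*a + X^3 + X = 0)
    (hb : (1+X)^3*b^3 + (X^3+X)*b^2 + (X^3+X+1)*b + X^3 + X = 0) : a = b := by
  have key : (a - b) * ((1+X)^3*(a^2+a*b+b^2) + (X^3+X)*(a+b) + (X^3+X+1)) = 0 := by
    linear_combination ha - hb
  rcases mul_eq_zero.mp key with hk | hk
  · exact sub_eq_zero.mp hk
  · exfalso
    have := congrArg (coeff (R := F2) 0) hk
    simp only [coeff_zero_eq_constantCoeff, map_add, map_mul, map_pow, map_one,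
      constantCoeff_X, map_zero] at this
    rw [coeff_zero_eq_constantCoeff] at ha0 hb0
    rw [ha0, hb0] at this
    norm_num at this

set_option maxHeartbeats 2000000 in
lemma main_props {σ : PowerSeries F2} (hN : IsNott σ)
    (h : (1+X)^3*σ^3 + (X^3+X)*σ^2 + (X^3+X+1)*σ + X^3 + X = 0) :
    coeff (R := F2) 2 σ = 1 ∧ coeff (R := F2) 3 σ = 0 ∧ coeff (R := F2) 4 σ = 1 ∧ coeff (R := F2) 5 σ = 1 ∧
      NGOrder σ 4 ∧ HasDepth σ 1 ∧ HasDepth (ngIter σ 2) 3 := by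
  obtain ⟨h0, h1⟩ := hN
  have hE := expand_eqn h
  have hc2 : coeff (R := F2) 2 σ = 1 := by
    have e := congrArg (coeff (R := F2) 2) hE
    simp only [map_add, map_zero, PowerSeries.coeff_mul,
      Finset.Nat.sum_antidiagonal_eq_sum_range_succ_mk, Finset.sum_range_succ,
      Finset.sum_range_zero, PowerSeries.coeff_X, PowerSeries.coeff_X_pow, h0, h1] at e
    norm_num at e
    revert e; generalize coeff (R := F2) 2 σ = x; revert x; decide
  have hc3 : coeff (R := F2) 3 σ = 0 := by
    have e := congrArg (coeff (R := F2) 3) hE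
    simp only [map_add, map_zero, PowerSeries.coeff_mul,
      Finset.Nat.sum_antidiagonal_eq_sum_range_succ_mk, Finset.sum_range_succ,
      Finset.sum_range_zero, PowerSeries.coeff_X, PowerSeries.coeff_X_pow, h0, h1, hc2] at e
    norm_num at e
    revert e; generalize coeff (R := F2) 3 σ = x; revert x; decide
  have hc4 : coeff (R := F2) 4 σ = 1 := by
    have e := congrArg (coeff (R := F2) 4) hE
    simp only [map_add, map_zero, PowerSeries.coeff_mul,
      Finset.Nat.sum_antidiagonal_eq_sum_range_succ_mk, Finset.sum_range_succ,
      Finset.sum_range_zero, PowerSeries.coeff_X, PowerSeries.coeff_X_pow, h0, h1, hc2, hc3] at e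
    norm_num at e
    revert e; generalize coeff (R := F2) 4 σ = x; revert x; decide
  have hc5 : coeff (R := F2) 5 σ = 1 := by
    have e := congrArg (coeff (R := F2) 5) hE
    simp only [map_add, map_zero, PowerSeries.coeff_mul,
      Finset.Nat.sum_antidiagonal_eq_sum_range_succ_mk, Finset.sum_range_succ,
      Finset.sum_range_zero, PowerSeries.coeff_X, PowerSeries.coeff_X_pow, h0, h1, hc2, hc3,
      hc4] at e
    norm_num at e
    revert e; generalize coeff (R := F2) 5 σ = x; revert x; decide
  have hσ0 : constantCoeff (R := F2) σ = 0 := by rw [← coeff_zero_eq_constantCoeff_apply]; exact h0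
  set η : PowerSeries F2 := ngComp σ σ with hηdef
  have hη0' : coeff (R := F2) 0 η = 0 := by
    rw [hηdef, constantCoeff_ngComp]; exact h0
  have hη0 : constantCoeff (R := F2) η = 0 := by
    rw [← coeff_zero_eq_constantCoeff_apply]; exact hη0'
  have hη1 : coeff (R := F2) 1 η = 1 := by rw [hηdef, coeff_one_ngComp, h1, one_mul]
  have hηco : ∀ k, coeff (R := F2) k η =
      ∑ n ∈ Finset.range (k+1), coeff (R := F2) n σ * coeff (R := F2) k (σ ^ n) := fun k => coeff_ngComp k
  have hη2 : coeff (R := F2) 2 η = 0 := by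
    rw [hηco]
    simp only [Finset.sum_range_succ, Finset.sum_range_zero, pow_zero, pow_one, pow_two,
      PowerSeries.coeff_one, PowerSeries.coeff_mul,
      Finset.Nat.sum_antidiagonal_eq_sum_range_succ_mk, h0, h1, hc2]
    norm_num [h0, h1, hc2, twoF]
    try decide
  have hη3 : coeff (R := F2) 3 η = 0 := by
    rw [hηco]
    simp only [Finset.sum_range_succ, Finset.sum_range_zero, pow_succ, pow_zero, one_mul,
      PowerSeries.coeff_one, PowerSeries.coeff_mul,
      Finset.Nat.sum_antidiagonal_eq_sum_range_succ_mk, h0, h1, hc2, hc3]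
    norm_num [h0, h1, hc2, hc3, twoF]
    try decide
  have hη4 : coeff (R := F2) 4 η = 1 := by
    rw [hηco]
    simp only [Finset.sum_range_succ, Finset.sum_range_zero, pow_succ, pow_zero, one_mul,
      PowerSeries.coeff_one, PowerSeries.coeff_mul,
      Finset.Nat.sum_antidiagonal_eq_sum_range_succ_mk, h0, h1, hc2, hc3, hc4]
    norm_num [h0, h1, hc2, hc3, hc4, twoF]
    try decide
  -- the second composition equation
  have hP2 : (1+σ)^3*η^3 + (σ^3+σ)*η^2 + (σ^3+σ+1)*η + σ^3 + σ = 0 := by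
    have h2 := congrArg (ngHom σ hσ0) h
    simp only [map_add, map_mul, map_pow, map_one, map_zero, ngHom_apply,
      ngComp_X hσ0] at h2
    exact h2
  have hQW : (X^3*η^3 + X^2*η^2 + η + X) * (1 + η^2 + σ^2 + σ^2*η + σ^2*η^2 + X*η + X*η^3 + X*σ^2*η + X*σ^2*η^3 + X^2 + X^2*η + X^2*σ + X^2*σ^2*η) = 0 := by
    linear_combination (-(1 + η + η^2 + η^3 + σ*η^3 + σ*η^4 + σ^2 + σ^2*η^4 + X*η + X*η^2 + X*σ + X*σ*η^3 + X*σ*η^4 + X*σ^2 + X*σ^2*η + X*σ^2*η^2 + X*σ^2*η^3 + X^2*η^5 + X^2*η^6 + X^2*σ*η^2 + X^2*σ^2*η^3 + X^2*σ^2*η^4 + X^2*σ^2*η^5 + X^2*σ^2*η^6)) * h - (1 + σ^2 + σ^2*η + X + X*η + X*σ^2*η + X^2 + X^2*η + X^2*σ*η + X^2*σ*η^2 + X^2*σ*η^3 + X^2*σ^2*η + X^2*σ^2*η^3 + X^3*η + X^3*η^2 + X^3*η^3 + X^3*σ*η^2 + X^3*σ^2*η + X^3*σ^2*η^3 + X^4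 + X^4*η^3 + X^4*σ*η + X^4*σ*η^2 + X^4*σ*η^3 + X^4*σ^2 + X^4*σ^2*η^3 + X^5*η^2 + X^5*η^3 + X^5*σ*η^2 + X^5*σ^2*η^3) * hP2 + (η + η^3 + σ + σ*η + σ*η^2 + 2*σ*η^3 + σ^2*η + σ^2*η^2 + 3*σ^2*η^3 + σ^2*η^4 + 2*σ^3 + 2*σ^3*η + 2*σ^3*η^2 + 3*σ^3*η^3 + 2*σ^3*η^4 + 2*σ^4*η^3 + 2*σ^4*η^4 + σ^5 + σ^5*η + σ^5*η^2 + σ^5*η^3 + σ^5*η^4 + X + X*η + 2*X*η^2 + X*η^3 + X*η^4 + X*σ + 2*X*σ*η + 2*X*σ*η^2 + 3*X*σ*η^3 + 2*X*σ*η^4 + 2*X*σ^2 + X*σ^2*η + 2*X*σ^2*η^2 + 3*X*σ^2*η^3 + 4*X*σ^2*η^4 + 3*X*σ^3 + 4*X*σ^3*η + 4*X*σ^3*η^2 + 4*X*σ^3*η^3 + 3*X*σ^3*η^4 + X*σ^4 + 2*X*σ^4*η^3 + 4*X*σ^4*η^4 + 2*X*σ^5 + X*σ^5*η + X*σ^5*η^2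 + X*σ^5*η^3 + 2*X*σ^5*η^4 + 2*X^2*η + 2*X^2*η^2 + X^2*η^3 + X^2*η^4 + X^2*σ + 2*X^2*σ*η + 2*X^2*σ*η^2 + 3*X^2*σ*η^3 + 3*X^2*σ*η^4 + X^2*σ*η^5 + X^2*σ*η^6 + X^2*σ^2 + 2*X^2*σ^2*η + 4*X^2*σ^2*η^2 + 5*X^2*σ^2*η^3 + 6*X^2*σ^2*η^4 + 2*X^2*σ^2*η^5 + 2*X^2*σ^2*η^6 + 3*X^2*σ^3 + 5*X^2*σ^3*η + 5*X^2*σ^3*η^2 + 5*X^2*σ^3*η^3 + 5*X^2*σ^3*η^4 + 3*X^2*σ^3*η^5 + 4*X^2*σ^3*η^6 + 2*X^2*σ^4 + X^2*σ^4*η + 2*X^2*σ^4*η^2 + 5*X^2*σ^4*η^3 + 6*X^2*σ^4*η^4 + X^2*σ^4*η^5 + 2*X^2*σ^4*η^6 + 3*X^2*σ^5 + 2*X^2*σ^5*η + 2*X^2*σ^5*η^2 + 3*X^2*σ^5*η^3 + 3*X^2*σ^5*η^4 + X^2*σ^5*η^5 + X^2*σ^5*η^6 + X^3 + X^3*η +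 X^3*η^2 + 2*X^3*η^3 + X^3*η^4 + 2*X^3*η^5 + X^3*η^6 + X^3*σ + X^3*σ*η + 2*X^3*σ*η^2 + 3*X^3*σ*η^3 + 3*X^3*σ*η^4 + 3*X^3*σ*η^5 + 2*X^3*σ*η^6 + X^3*σ^2 + X^3*σ^2*η + 2*X^3*σ^2*η^2 + 3*X^3*σ^2*η^3 + 5*X^3*σ^2*η^4 + 5*X^3*σ^2*η^5 + 3*X^3*σ^2*η^6 + X^3*σ^3 + 3*X^3*σ^3*η + 4*X^3*σ^3*η^2 + 4*X^3*σ^3*η^3 + 5*X^3*σ^3*η^4 + 5*X^3*σ^3*η^5 + 4*X^3*σ^3*η^6 + 2*X^3*σ^4 + 2*X^3*σ^4*η^2 + 3*X^3*σ^4*η^3 + 5*X^3*σ^4*η^4 + X^3*σ^4*η^5 + 2*X^3*σ^4*η^6 + 2*X^3*σ^5 + 2*X^3*σ^5*η + 2*X^3*σ^5*η^2 + 4*X^3*σ^5*η^3 + 3*X^3*σ^5*η^4 + 2*X^3*σ^5*η^5 + 2*X^3*σ^5*η^6 + X^4*η + X^4*η^2 + X^4*η^3 + X^4*η^4 + X^4*η^6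 + X^4*σ + X^4*σ*η + 2*X^4*σ*η^2 + 3*X^4*σ*η^3 + 2*X^4*σ*η^4 + X^4*σ*η^5 + 2*X^4*σ*η^6 + X^4*σ^2 + 2*X^4*σ^2*η + 2*X^4*σ^2*η^2 + 5*X^4*σ^2*η^3 + 4*X^4*σ^2*η^4 + 2*X^4*σ^2*η^5 + 4*X^4*σ^2*η^6 + 2*X^4*σ^3 + 2*X^4*σ^3*η + 2*X^4*σ^3*η^2 + 4*X^4*σ^3*η^3 + 3*X^4*σ^3*η^4 + 4*X^4*σ^3*η^5 + 5*X^4*σ^3*η^6 + X^4*σ^4 + X^4*σ^4*η + 3*X^4*σ^4*η^2 + 4*X^4*σ^4*η^3 + 2*X^4*σ^4*η^4 + X^4*σ^4*η^5 + 2*X^4*σ^4*η^6 + X^4*σ^5 + X^4*σ^5*η + X^4*σ^5*η^2 + 3*X^4*σ^5*η^3 + 2*X^4*σ^5*η^4 + 2*X^4*σ^5*η^5 + 2*X^4*σ^5*η^6 + X^5*η^3 + X^5*η^4 + X^5*η^5 + X^5*η^6 + X^5*σ*η^2 + 2*X^5*σ*η^3 + X^5*σ*η^4 + 3*X^5*σ*η^5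 + 2*X^5*σ*η^6 + X^5*σ^2*η^2 + X^5*σ^2*η^3 + 2*X^5*σ^2*η^4 + 4*X^5*σ^2*η^5 + 3*X^5*σ^2*η^6 + X^5*σ^3*η^2 + 2*X^5*σ^3*η^3 + 2*X^5*σ^3*η^4 + 4*X^5*σ^3*η^5 + 3*X^5*σ^3*η^6 + X^5*σ^4*η^2 + X^5*σ^4*η^3 + X^5*σ^4*η^4 + X^5*σ^4*η^5 + 2*X^5*σ^4*η^6 + X^5*σ^5*η^3 + X^5*σ^5*η^4 + X^5*σ^5*η^5 + X^5*σ^5*η^6) * two_eq_zero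
  have hQ : X^3*η^3 + X^2*η^2 + η + X = 0 := by
    rcases mul_eq_zero.mp hQW with hk | hk
    · exact hk
    · exfalso
      have := congrArg (constantCoeff (R := F2)) hk
      simp only [map_add, map_mul, map_pow, map_one, constantCoeff_X, map_zero, hσ0, hη0] at this
      norm_num at this
  -- involution property of η
  set ζ : PowerSeries F2 := ngComp η η with hζdef
  have hζ0 : constantCoeff (R := F2) ζ = 0 := by
    rw [← coeff_zero_eq_constantCoeff_apply, hζdef, constantCoeff_ngComp]; exact hη0'
  have hQ2 : η^3*ζ^3 + η^2*ζ^2 + ζ + η = 0 := by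
    have h2 := congrArg (ngHom η hη0) hQ
    simp only [map_add, map_mul, map_pow, map_one, map_zero, ngHom_apply,
      ngComp_X hη0] at h2
    exact h2
  have hζX : ζ = X := by
    have key : (ζ - X) * (η^3*(ζ^2+ζ*X+X^2) + η^2*(ζ+X) + 1) = 0 := by
      linear_combination hQ2 - hQ
    rcases mul_eq_zero.mp key with hk | hk
    · exact sub_eq_zero.mp hk
    · exfalso
      have := congrArg (constantCoeff (R := F2)) hk
      simp only [map_add, map_mul, map_pow, map_one, constantCoeff_X, map_zero,
        hη0, hζ0] at this
      norm_num at this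
  -- iterates
  have hi1 : ngIter σ 1 = σ := by
    show ngComp σ (ngIter σ 0) = σ
    show ngComp σ X = σ
    exact ngComp_X_right
  have hi2 : ngIter σ 2 = η := by
    show ngComp σ (ngIter σ 1) = η
    rw [hi1, hηdef]
  have hi3 : ngIter σ 3 = ngComp σ η := by
    show ngComp σ (ngIter σ 2) = ngComp σ η
    rw [hi2]
  have hi4 : ngIter σ 4 = X := by
    show ngComp σ (ngIter σ 3) = X
    rw [hi3, ← ngComp_assoc hσ0 hη0, ← hηdef, ← hζdef, hζX]
  have hσX : σ ≠ X := by
    intro hx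
    rw [hx] at hc2
    simp [PowerSeries.coeff_X] at hc2
  have hηX : η ≠ X := by
    intro hx
    rw [hx] at hη4
    simp [PowerSeries.coeff_X] at hη4
  have hi3X : ngComp σ η ≠ X := by
    intro hx
    have : σ = η := by
      calc σ = ngComp σ X := ngComp_X_right.symm
        _ = ngComp σ (ngComp η η) := by rw [← hζdef, hζX]
        _ = ngComp (ngComp σ η) η := (ngComp_assoc hη0 hη0).symm
        _ = ngComp X η := by rw [hx]
        _ = η := ngComp_X hη0
    rw [this] at hc2
    rw [hη2] at hc2
    exact one_ne_zero hc2.symm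
  refine ⟨hc2, hc3, hc4, hc5, ⟨hi4, ?_⟩, ⟨?_, ?_⟩, ?_⟩
  · intro m hm hm4
    interval_cases m
    · rw [hi1]; exact hσX
    · rw [hi2]; exact hηX
    · rw [hi3]; exact hi3X
  · intro i hi
    interval_cases i
    · simp [map_sub, PowerSeries.coeff_X, h0]
    · simp [map_sub, PowerSeries.coeff_X, h1]
  · simp [map_sub, PowerSeries.coeff_X, hc2]
  · rw [hi2]
    constructor
    · intro i hi
      interval_cases i
      · simp [map_sub, PowerSeries.coeff_X, hη0']
      · simp [map_sub, PowerSeries.coeff_X, hη1]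
      · simp [map_sub, PowerSeries.coeff_X, hη2]
      · simp [map_sub, PowerSeries.coeff_X, hη3]
    · simp [map_sub, PowerSeries.coeff_X, hη4]

end NG

theorem statement3 :
    (∃! σ : PowerSeries F2, IsNott σ ∧
        (1 + PowerSeries.X) ^ 3 * σ ^ 3 + (PowerSeries.X ^ 3 + PowerSeries.X) * σ ^ 2 +
          (PowerSeries.X ^ 3 + PowerSeries.X + 1) * σ + PowerSeries.X ^ 3 + PowerSeries.X = 0) ∧
    ∀ σ : PowerSeries F2, IsNott σ →
      (1 + PowerSeries.X) ^ 3 * σ ^ 3 + (PowerSeries.X ^ 3 + PowerSeries.X) * σ ^ 2 +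
          (PowerSeries.X ^ 3 + PowerSeries.X + 1) * σ + PowerSeries.X ^ 3 + PowerSeries.X = 0 →
      PowerSeries.coeff (R := F2) 2 σ = 1 ∧ PowerSeries.coeff (R := F2) 3 σ = 0 ∧
      PowerSeries.coeff (R := F2) 4 σ = 1 ∧ PowerSeries.coeff (R := F2) 5 σ = 1 ∧
      NGOrder σ 4 ∧ HasDepth σ 1 ∧ HasDepth (ngIter σ 2) 3 := by
  constructor
  · obtain ⟨a, ha0, haeq⟩ := NG.exists_root
    have ha0' : PowerSeries.coeff (R := F2) 0 a = 0 := by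
      rw [PowerSeries.coeff_zero_eq_constantCoeff_apply]; exact ha0
    refine ⟨a, ⟨⟨ha0', NG.root_coeff_one ha0' haeq⟩, by linear_combination haeq⟩, ?_⟩
    intro y hy
    exact NG.root_unique hy.1.1 ha0' (by linear_combination hy.2) haeq
  · intro σ hN h
    exact NG.main_props hN (by linear_combination h)
end

section
/- Let μ ≥ 2 be an integer and m = 2^μ − 1. Define σ_{S,m} := t + Σ_{k≥1} t^{e_k} ∈ F₂[[t]], where e_k = ((m+1)/(m−1))·(m·((m+1)/2)^{k−1} − 1) (these exponents are integers; equivalently, the support of σ_{S,m} consists of 1 together with the integers whose binary expansion is 1 0^{μ−1} (1 0^{μ−2})^ℓ 0 for some ℓ ≥ 0). Then σ_{S,m} ∈ 𝒩(F₂) has compositional order 2 and depth m, it is 1-sparse, and every element of 𝒩(F₂) of compositional order 2 and depth m is conjugate in 𝒩(F₂) to σ_{S,m}. -/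
open PowerSeries

/-- `σ` is `r`-sparse: the number of nonzero coefficients among the first `N` grows
like `O((log N)^r)`. -/
def IsSparse (r : ℕ) (σ : PowerSeries F2) : Prop :=
  ∃ C : ℝ, 0 < C ∧ ∀ N : ℕ, 2 ≤ N →
    (((Finset.range (N + 1)).filter fun k => PowerSeries.coeff (R := F2) k σ ≠ 0).card : ℝ) ≤
      C * Real.log N ^ r

/- The series `σ_{S,m} = t + Σ_{k≥1} t^{e_k}`, with
`e_k = ((m+1)/(m−1))·(m·((m+1)/2)^{k−1} − 1)` (computed in `ℚ`). -/
open Classical in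
noncomputable def sigmaSm (m : ℕ) : PowerSeries F2 :=
  PowerSeries.mk fun n =>
    if n = 1 ∨ ∃ k : ℕ, 1 ≤ k ∧
        (n : ℚ) = (((m : ℚ) + 1) / ((m : ℚ) - 1)) *
          ((m : ℚ) * (((m : ℚ) + 1) / 2) ^ (k - 1) - 1)
    then 1 else 0

namespace NGaux
open Finset
open scoped Classical

instance : CharP (PowerSeries F2) 2 := ⟨fun n => by
    constructor
    · intro h
      have h2 := congrArg (PowerSeries.constantCoeff (R := F2)) h
      simp only [map_natCast, map_zero] at h2
      exact (CharP.cast_eq_zero_iff F2 2 n).mp h2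
    · intro h
      have : ((n : ℕ) : F2) = 0 := (CharP.cast_eq_zero_iff F2 2 n).mpr h
      rw [show ((n : ℕ) : PowerSeries F2) = PowerSeries.C (R := F2) ((n : ℕ) : F2) from
        (map_natCast _ n).symm, this, map_zero]⟩

lemma z2 {a : F2} (h : a ≠ 0) : a = 1 := by revert h; revert a; decide

lemma coeff_ngComp (σ τ : PowerSeries F2) (k : ℕ) :
    PowerSeries.coeff (R := F2) k (ngComp σ τ) =
      ∑ n ∈ range (k + 1), PowerSeries.coeff (R := F2) n σ * PowerSeries.coeff (R := F2) k (τ ^ n) :=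
  PowerSeries.coeff_mk _ _

lemma cpow0 {τ : PowerSeries F2} (hτ : PowerSeries.constantCoeff (R := F2) τ = 0) {k n : ℕ}
    (h : k < n) : PowerSeries.coeff (R := F2) k (τ ^ n) = 0 := by
  have hdvd : (PowerSeries.X : PowerSeries F2) ^ n ∣ τ ^ n :=
    pow_dvd_pow_of_dvd (PowerSeries.X_dvd_iff.mpr hτ) n
  exact PowerSeries.X_pow_dvd_iff.mp hdvd k h

lemma dvd_iff_coeff {N : ℕ} {f : PowerSeries F2} :
    (PowerSeries.X : PowerSeries F2) ^ N ∣ f ↔ ∀ k < N, PowerSeries.coeff (R := F2) k f = 0 :=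
  PowerSeries.X_pow_dvd_iff

lemma coeff_eq_of_dvd {N : ℕ} {f g : PowerSeries F2}
    (h : (PowerSeries.X : PowerSeries F2) ^ N ∣ f - g) {k : ℕ} (hk : k < N) :
    PowerSeries.coeff (R := F2) k f = PowerSeries.coeff (R := F2) k g := by
  have := dvd_iff_coeff.mp h k hk
  rw [map_sub, sub_eq_zero] at this
  exact this

lemma dvd_of_coeff_eq {N : ℕ} {f g : PowerSeries F2}
    (h : ∀ k < N, PowerSeries.coeff (R := F2) k f = PowerSeries.coeff (R := F2) k g) :
    (PowerSeries.X : PowerSeries F2) ^ N ∣ f - g :=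
  dvd_iff_coeff.mpr fun k hk => by rw [map_sub, h k hk, sub_self]

lemma eq_of_forall_dvd {f g : PowerSeries F2}
    (h : ∀ N, (PowerSeries.X : PowerSeries F2) ^ N ∣ f - g) : f = g := by
  ext k
  have := coeff_eq_of_dvd (h (k + 1)) (Nat.lt_succ_self k)
  exact this

lemma powdiff {a b : PowerSeries F2} (ha : PowerSeries.constantCoeff (R := F2) a = 0)
    (hb : PowerSeries.constantCoeff (R := F2) b = 0) {M : ℕ}
    (h : (PowerSeries.X : PowerSeries F2) ^ M ∣ a - b) (n : ℕ) :
    (PowerSeries.X : PowerSeries F2) ^ (M + (n - 1)) ∣ a ^ n - b ^ n := by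
  rcases n with _ | n
  · simp
  · rw [← geom_sum₂_mul a b (n+1)]
    have h1 : (PowerSeries.X : PowerSeries F2) ^ (n + 1 - 1) ∣
        ∑ i ∈ range (n + 1), a ^ i * b ^ (n - i) := by
      apply Finset.dvd_sum
      intro i hi
      simp only [Nat.add_sub_cancel]
      have : (PowerSeries.X : PowerSeries F2) ^ i * (PowerSeries.X : PowerSeries F2) ^ (n - i) ∣
          a ^ i * b ^ (n - i) :=
        mul_dvd_mul (pow_dvd_pow_of_dvd (PowerSeries.X_dvd_iff.mpr ha) i)
          (pow_dvd_pow_of_dvd (PowerSeries.X_dvd_iff.mpr hb) (n - i))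
      rw [← pow_add] at this
      exact dvd_trans (pow_dvd_pow _ (by omega : n ≤ i + (n - i))) this
    rw [add_comm]
    rw [pow_add]
    exact mul_dvd_mul h1 h

-- linearity in the left argument
lemma ngComp_add_left (f g τ : PowerSeries F2) :
    ngComp (f + g) τ = ngComp f τ + ngComp g τ := by
  ext k
  simp only [coeff_ngComp, map_add, add_mul, Finset.sum_add_distrib]

lemma ngComp_sub_left (f g τ : PowerSeries F2) :
    ngComp (f - g) τ = ngComp f τ - ngComp g τ := by
  ext k
  simp only [coeff_ngComp, map_sub, sub_mul, Finset.sum_sub_distrib]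

lemma ngComp_X_right (σ : PowerSeries F2) : ngComp σ PowerSeries.X = σ := by
  ext k
  rw [coeff_ngComp]
  rw [Finset.sum_eq_single k]
  · simp [PowerSeries.coeff_X_pow]
  · intro n hn hne
    rw [← pow_one (PowerSeries.X : PowerSeries F2), ← pow_mul, one_mul,
      PowerSeries.coeff_X_pow, if_neg (fun h => hne h.symm), mul_zero]
  · intro h
    exact absurd (Finset.self_mem_range_succ k) h

lemma ngComp_X_left {τ : PowerSeries F2} (hτ : PowerSeries.constantCoeff (R := F2) τ = 0) :
    ngComp PowerSeries.X τ = τ := by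
  ext k
  rw [coeff_ngComp]
  rw [Finset.sum_eq_single 1]
  · simp
  · intro n hn hne
    rw [PowerSeries.coeff_X, if_neg hne, zero_mul]
  · intro h
    simp only [Finset.mem_range] at h
    have hk : k = 0 := by omega
    subst hk
    rw [PowerSeries.coeff_zero_eq_constantCoeff_apply, pow_one, hτ, mul_zero]

lemma ngComp_C_left (r : F2) (τ : PowerSeries F2) :
    ngComp (PowerSeries.C (R := F2) r) τ = PowerSeries.C (R := F2) r := by
  ext k
  rw [coeff_ngComp]
  rw [Finset.sum_eq_single 0]
  · simp [PowerSeries.coeff_C, PowerSeries.coeff_one]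
  · intro n hn hne
    rw [PowerSeries.coeff_C, if_neg hne, zero_mul]
  · intro h
    simp at h

lemma ngComp_one_left (τ : PowerSeries F2) : ngComp 1 τ = 1 := by
  rw [← map_one (PowerSeries.C (R := F2)), ngComp_C_left, map_one]

lemma constantCoeff_ngComp (σ τ : PowerSeries F2) :
    PowerSeries.constantCoeff (R := F2) (ngComp σ τ) = PowerSeries.constantCoeff (R := F2) σ := by
  rw [← PowerSeries.coeff_zero_eq_constantCoeff_apply,
    ← PowerSeries.coeff_zero_eq_constantCoeff_apply]
  rw [coeff_ngComp]
  simp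

-- the aeval bridge
lemma coeff_aeval {τ : PowerSeries F2} (hτ : PowerSeries.constantCoeff (R := F2) τ = 0)
    (P : Polynomial F2) (j : ℕ) :
    PowerSeries.coeff (R := F2) j (Polynomial.aeval τ P) =
      ∑ n ∈ range (j + 1), P.coeff n * PowerSeries.coeff (R := F2) j (τ ^ n) := by
  rw [Polynomial.aeval_eq_sum_range' (n := max (P.natDegree + 1) (j + 1))
    (lt_of_lt_of_le (Nat.lt_succ_self _) (le_max_left _ _))]
  rw [map_sum]
  rw [← Finset.sum_subset (Finset.range_subset_range.mpr (le_max_right (P.natDegree + 1) (j + 1)))]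
  · apply Finset.sum_congr rfl
    intro n _
    rw [PowerSeries.coeff_smul, smul_eq_mul]
  · intro n _ hn
    simp only [Finset.mem_range, not_lt] at hn
    rw [PowerSeries.coeff_smul, smul_eq_mul, cpow0 hτ (by omega), mul_zero]

lemma coeff_ngComp_eq_aeval {τ : PowerSeries F2} (hτ : PowerSeries.constantCoeff (R := F2) τ = 0)
    (σ : PowerSeries F2) {j M : ℕ} (hj : j < M) :
    PowerSeries.coeff (R := F2) j (ngComp σ τ) =
      PowerSeries.coeff (R := F2) j (Polynomial.aeval τ (PowerSeries.trunc M σ)) := by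
  rw [coeff_aeval hτ, coeff_ngComp]
  apply Finset.sum_congr rfl
  intro n hn
  simp only [Finset.mem_range] at hn
  rw [PowerSeries.coeff_trunc, if_pos (by omega)]

lemma ngComp_mul_left {τ : PowerSeries F2} (hτ : PowerSeries.constantCoeff (R := F2) τ = 0)
    (f g : PowerSeries F2) : ngComp (f * g) τ = ngComp f τ * ngComp g τ := by
  ext k
  rw [coeff_ngComp_eq_aeval hτ (f * g) (Nat.lt_succ_self k)]
  have key : PowerSeries.coeff (R := F2) k (Polynomial.aeval τ (PowerSeries.trunc (k+1) (f*g)))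
      = PowerSeries.coeff (R := F2) k (Polynomial.aeval τ
        (PowerSeries.trunc (k+1) f * PowerSeries.trunc (k+1) g)) := by
    rw [coeff_aeval hτ, coeff_aeval hτ]
    apply Finset.sum_congr rfl
    intro n hn
    simp only [Finset.mem_range] at hn
    congr 1
    rw [PowerSeries.coeff_trunc, if_pos (by omega), Polynomial.coeff_mul,
      PowerSeries.coeff_mul]
    apply Finset.sum_congr rfl
    intro p hp
    rw [Finset.HasAntidiagonal.mem_antidiagonal] at hp
    rw [PowerSeries.coeff_trunc, if_pos (by omega), PowerSeries.coeff_trunc,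
      if_pos (by omega)]
  rw [key, map_mul]
  rw [PowerSeries.coeff_mul, PowerSeries.coeff_mul]
  apply Finset.sum_congr rfl
  intro p hp
  rw [Finset.HasAntidiagonal.mem_antidiagonal] at hp
  rw [← coeff_ngComp_eq_aeval hτ f (by omega : p.1 < k+1),
    ← coeff_ngComp_eq_aeval hτ g (by omega : p.2 < k+1)]

lemma ngComp_pow_left {τ : PowerSeries F2} (hτ : PowerSeries.constantCoeff (R := F2) τ = 0)
    (f : PowerSeries F2) (n : ℕ) : ngComp (f ^ n) τ = (ngComp f τ) ^ n := by
  induction n with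
  | zero => simpa using ngComp_one_left τ
  | succ n ih => rw [pow_succ, pow_succ, ngComp_mul_left hτ, ih]

lemma ngComp_Xpow_left {τ : PowerSeries F2} (hτ : PowerSeries.constantCoeff (R := F2) τ = 0)
    (n : ℕ) : ngComp (PowerSeries.X ^ n) τ = τ ^ n := by
  rw [ngComp_pow_left hτ, ngComp_X_left hτ]

-- congruence lemmas
lemma ngComp_dvd_left {N : ℕ} {g : PowerSeries F2}
    (h : (PowerSeries.X : PowerSeries F2) ^ N ∣ g) (τ : PowerSeries F2) :
    (PowerSeries.X : PowerSeries F2) ^ N ∣ ngComp g τ := by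
  rw [PowerSeries.X_pow_dvd_iff] at h ⊢
  intro k hk
  rw [coeff_ngComp]
  apply Finset.sum_eq_zero
  intro n hn
  simp only [Finset.mem_range] at hn
  rw [h n (by omega), zero_mul]

lemma ngComp_congr_left {N : ℕ} {f f' : PowerSeries F2}
    (h : (PowerSeries.X : PowerSeries F2) ^ N ∣ f - f') (τ : PowerSeries F2) :
    (PowerSeries.X : PowerSeries F2) ^ N ∣ ngComp f τ - ngComp f' τ := by
  rw [← ngComp_sub_left]
  exact ngComp_dvd_left h τ

lemma coeff_ngComp_sub (σ τ τ' : PowerSeries F2) (k : ℕ) :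
    PowerSeries.coeff (R := F2) k (ngComp σ τ - ngComp σ τ') =
      ∑ n ∈ range (k + 1),
        PowerSeries.coeff (R := F2) n σ * PowerSeries.coeff (R := F2) k (τ ^ n - τ' ^ n) := by
  rw [map_sub, coeff_ngComp, coeff_ngComp, ← Finset.sum_sub_distrib]
  apply Finset.sum_congr rfl
  intro n _
  rw [map_sub, mul_sub]

lemma ngComp_congr_right {N : ℕ} {τ τ' : PowerSeries F2}
    (h : (PowerSeries.X : PowerSeries F2) ^ N ∣ τ - τ') (σ : PowerSeries F2) :
    (PowerSeries.X : PowerSeries F2) ^ N ∣ ngComp σ τ - ngComp σ τ' := by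
  rw [PowerSeries.X_pow_dvd_iff]
  intro k hk
  rw [coeff_ngComp_sub]
  apply Finset.sum_eq_zero
  intro n _
  have : (PowerSeries.X : PowerSeries F2) ^ N ∣ τ ^ n - τ' ^ n :=
    dvd_trans h (sub_dvd_pow_sub_pow τ τ' n)
  rw [PowerSeries.X_pow_dvd_iff.mp this k hk, mul_zero]

lemma ngComp_assoc {a b c : PowerSeries F2} (hb : PowerSeries.constantCoeff (R := F2) b = 0)
    (hc : PowerSeries.constantCoeff (R := F2) c = 0) :
    ngComp (ngComp a b) c = ngComp a (ngComp b c) := by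
  have hbc : PowerSeries.constantCoeff (R := F2) (ngComp b c) = 0 := by
    rw [constantCoeff_ngComp]; exact hb
  ext k
  set A := PowerSeries.trunc (k + 1) a with hA
  -- step 1 : replace a by the polynomial A on the left
  have h1 : (PowerSeries.X : PowerSeries F2) ^ (k+1) ∣
      ngComp a b - (Polynomial.aeval b A : PowerSeries F2) := by
    apply PowerSeries.X_pow_dvd_iff.mpr
    intro j hj
    rw [map_sub, coeff_ngComp_eq_aeval hb a (by omega : j < k+1), sub_self]
  have h2 : PowerSeries.coeff (R := F2) k (ngComp (ngComp a b) c) =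
      PowerSeries.coeff (R := F2) k (ngComp (Polynomial.aeval b A : PowerSeries F2) c) := by
    have := ngComp_congr_left h1 c
    have := PowerSeries.X_pow_dvd_iff.mp this k (Nat.lt_succ_self k)
    rw [map_sub, sub_eq_zero] at this
    exact this
  -- step 2 : polynomial associativity
  have h3 : ∀ P : Polynomial F2, ngComp (Polynomial.aeval b P : PowerSeries F2) c =
      (Polynomial.aeval (ngComp b c) P : PowerSeries F2) := by
    intro P
    induction P using Polynomial.induction_on' with
    | add p q hp hq => rw [map_add, ngComp_add_left, hp, hq, map_add]
    | monomial n r =>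
      rw [Polynomial.aeval_monomial, Polynomial.aeval_monomial]
      rw [show (algebraMap F2 (PowerSeries F2)) r = PowerSeries.C (R := F2) r from rfl]
      rw [ngComp_mul_left hc, ngComp_C_left, ngComp_pow_left hc]
  rw [h2, h3]
  exact (coeff_ngComp_eq_aeval hbc a (Nat.lt_succ_self k)).symm

----------------------------------------------------------------
-- limits of coefficientwise-stabilizing sequences
noncomputable def glim (g : ℕ → PowerSeries F2) : PowerSeries F2 :=
  PowerSeries.mk fun j => PowerSeries.coeff (R := F2) j (g j)

lemma glim_spec {g : ℕ → PowerSeries F2}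
    (h : ∀ k, (PowerSeries.X : PowerSeries F2) ^ (k+1) ∣ g (k+1) - g k) (k : ℕ) :
    (PowerSeries.X : PowerSeries F2) ^ (k+1) ∣ glim g - g k := by
  have stable : ∀ j k, j ≤ k → PowerSeries.coeff (R := F2) j (g k) = PowerSeries.coeff (R := F2) j (g j) := by
    intro j k hjk
    induction k with
    | zero =>
      have : j = 0 := by omega
      rw [this]
    | succ n ih =>
      rcases Nat.lt_or_ge j (n+1) with h1 | h1
      · rw [coeff_eq_of_dvd (h n) (by omega), ih (by omega)]
      · have : j = n + 1 := by omega
        rw [this]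
  apply dvd_of_coeff_eq
  intro j hj
  show PowerSeries.coeff (R := F2) j (PowerSeries.mk _) = _
  rw [PowerSeries.coeff_mk]
  rw [stable j k (by omega)]

-- perturbation of the right argument of a composition
lemma ngComp_perturb {σ τ d : PowerSeries F2} (hτ : PowerSeries.constantCoeff (R := F2) τ = 0)
    (h1 : PowerSeries.coeff (R := F2) 1 σ = 1) {M : ℕ} (hM : 1 ≤ M)
    (hd : (PowerSeries.X : PowerSeries F2) ^ M ∣ d) :
    (PowerSeries.X : PowerSeries F2) ^ (M+1) ∣ ngComp σ (τ + d) - ngComp σ τ - d := by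
  have hd0 : PowerSeries.constantCoeff (R := F2) d = 0 := by
    rw [← PowerSeries.coeff_zero_eq_constantCoeff_apply]
    exact dvd_iff_coeff.mp hd 0 (by omega)
  have hτd : PowerSeries.constantCoeff (R := F2) (τ + d) = 0 := by rw [map_add, hτ, hd0, add_zero]
  apply dvd_iff_coeff.mpr
  intro k hk
  rw [map_sub, coeff_ngComp_sub, sub_eq_zero]
  rw [Finset.sum_eq_single 1]
  · rw [pow_one, pow_one, h1, one_mul, show τ + d - τ = d by ring]
  · intro n hn hne
    rcases Nat.eq_zero_or_pos n with h0 | h0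
    · subst h0; simp
    · have hn2 : 2 ≤ n := by omega
      have : (PowerSeries.X : PowerSeries F2) ^ (M + (n-1)) ∣ (τ + d) ^ n - τ ^ n :=
        powdiff hτd hτ (by rw [show τ + d - τ = d by ring]; exact hd) n
      rw [dvd_iff_coeff.mp this k (by omega), mul_zero]
  · intro hnot
    simp only [Finset.mem_range] at hnot
    have hk0 : k = 0 := by omega
    subst hk0
    rw [h1, one_mul, pow_one, pow_one, map_sub, sub_eq_zero]
    rw [map_add]
    rw [show PowerSeries.coeff (R := F2) 0 d = 0 from by
      rw [PowerSeries.coeff_zero_eq_constantCoeff_apply]; exact hd0, add_zero]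
-- note: goal after sum_eq_single is `∑ = coeff k d`; handled above

-- compositional inverse
noncomputable def invSeq (σ : PowerSeries F2) : ℕ → PowerSeries F2
  | 0 => PowerSeries.X
  | k+1 => invSeq σ k +
      PowerSeries.C (R := F2) (PowerSeries.coeff (R := F2) (k+2) (ngComp σ (invSeq σ k) - PowerSeries.X)) *
        PowerSeries.X ^ (k+2)

noncomputable def ngInv (σ : PowerSeries F2) : PowerSeries F2 := glim (invSeq σ)

lemma invSeq_spec {σ : PowerSeries F2} (h0 : PowerSeries.coeff (R := F2) 0 σ = 0)
    (h1 : PowerSeries.coeff (R := F2) 1 σ = 1) (k : ℕ) :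
    PowerSeries.constantCoeff (R := F2) (invSeq σ k) = 0 ∧
      (PowerSeries.X : PowerSeries F2) ^ (k+2) ∣ ngComp σ (invSeq σ k) - PowerSeries.X := by
  induction k with
  | zero =>
    constructor
    · simp [invSeq]
    · rw [show invSeq σ 0 = PowerSeries.X from rfl, ngComp_X_right]
      apply dvd_of_coeff_eq
      intro j hj
      interval_cases j
      · rwa [PowerSeries.coeff_zero_X]
      · rwa [PowerSeries.coeff_one_X]
  | succ k ih =>
    obtain ⟨ih0, ihd⟩ := ih
    set g := invSeq σ k
    set c := PowerSeries.coeff (R := F2) (k+2) (ngComp σ g - PowerSeries.X) with hc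
    set d := PowerSeries.C (R := F2) c * PowerSeries.X ^ (k+2) with hdd
    have hstep : invSeq σ (k+1) = g + d := rfl
    have hdvd_d : (PowerSeries.X : PowerSeries F2) ^ (k+2) ∣ d := Dvd.intro_left _ rfl
    constructor
    · rw [hstep, map_add, ih0, map_mul, map_pow, PowerSeries.constantCoeff_X,
        zero_pow (by omega), mul_zero, add_zero]
    · rw [hstep]
      have key := ngComp_perturb ih0 h1 (by omega : 1 ≤ k+2) hdvd_d
      have rest : (PowerSeries.X : PowerSeries F2) ^ (k+3) ∣ (ngComp σ g - PowerSeries.X) + d := by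
        apply dvd_iff_coeff.mpr
        intro j hj
        rw [map_add]
        rcases Nat.lt_or_ge j (k+2) with hj2 | hj2
        · rw [dvd_iff_coeff.mp ihd j hj2, dvd_iff_coeff.mp hdvd_d j hj2, add_zero]
        · have : j = k + 2 := by omega
          subst this
          rw [hdd, PowerSeries.coeff_C_mul, PowerSeries.coeff_X_pow, if_pos rfl, mul_one, ← hc]
          exact CharTwo.add_self_eq_zero c
      have : ngComp σ (g + d) - PowerSeries.X =
          (ngComp σ (g + d) - ngComp σ g - d) + ((ngComp σ g - PowerSeries.X) + d) := by ring
      rw [this]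
      exact dvd_add (dvd_trans (pow_dvd_pow _ (by omega)) key) rest

lemma ngInv_spec {σ : PowerSeries F2} (h : IsNott σ) :
    IsNott (ngInv σ) ∧ ngComp σ (ngInv σ) = PowerSeries.X := by
  obtain ⟨h0, h1⟩ := h
  have hstab : ∀ k, (PowerSeries.X : PowerSeries F2) ^ (k+1) ∣ invSeq σ (k+1) - invSeq σ k := by
    intro k
    rw [show invSeq σ (k+1) - invSeq σ k =
      PowerSeries.C (R := F2) (PowerSeries.coeff (R := F2) (k+2) (ngComp σ (invSeq σ k) - PowerSeries.X)) *
        PowerSeries.X ^ (k+2) from by rw [invSeq]; ring]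
    exact Dvd.dvd.mul_left (pow_dvd_pow _ (by omega)) _
  have hg := glim_spec hstab
  constructor
  · constructor
    · show PowerSeries.coeff (R := F2) 0 (glim (invSeq σ)) = 0
      have := coeff_eq_of_dvd (hg 0) (show 0 < 1 by omega)
      rw [this, show invSeq σ 0 = PowerSeries.X from rfl, PowerSeries.coeff_zero_X]
    · show PowerSeries.coeff (R := F2) 1 (glim (invSeq σ)) = 1
      have := coeff_eq_of_dvd (hg 1) (show 1 < 2 by omega)
      rw [this, show invSeq σ 1 = PowerSeries.X + _ from rfl, map_add, PowerSeries.coeff_one_X,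
        PowerSeries.coeff_C_mul, PowerSeries.coeff_X_pow, if_neg (by omega), mul_zero, add_zero]
  · apply eq_of_forall_dvd
    intro N
    rcases Nat.eq_zero_or_pos N with h | h
    · subst h; simp
    · obtain ⟨k, rfl⟩ : ∃ k, N = k + 1 := ⟨N - 1, by omega⟩
      have hc := ngComp_congr_right (hg k) σ
      have := (invSeq_spec h0 h1 k).2
      have comb : ngComp σ (ngInv σ) - PowerSeries.X =
          (ngComp σ (ngInv σ) - ngComp σ (invSeq σ k)) +
            (ngComp σ (invSeq σ k) - PowerSeries.X) := by ring
      rw [comb]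
      exact dvd_add hc (dvd_trans (pow_dvd_pow _ (by omega)) this)

lemma isNott_ngComp {σ τ : PowerSeries F2} (hσ : IsNott σ) (hτ : IsNott τ) :
    IsNott (ngComp σ τ) := by
  obtain ⟨hσ0, hσ1⟩ := hσ
  obtain ⟨hτ0, hτ1⟩ := hτ
  constructor
  · rw [coeff_ngComp]; simpa using hσ0
  · rw [coeff_ngComp]
    rw [show range (1+1) = {0, 1} from rfl]
    rw [Finset.sum_insert (by simp), Finset.sum_singleton]
    rw [pow_zero, pow_one, hσ1, hτ1, mul_one, hσ0, zero_mul, zero_add]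

lemma ngInv_left {σ : PowerSeries F2} (h : IsNott σ) : ngComp (ngInv σ) σ = PowerSeries.X := by
  obtain ⟨hρN, hρ⟩ := ngInv_spec h
  set ρ := ngInv σ
  obtain ⟨hρ'N, hρ'⟩ := ngInv_spec hρN
  set ρ' := ngInv ρ
  have hσ0 : PowerSeries.constantCoeff (R := F2) σ = 0 := by
    rw [← PowerSeries.coeff_zero_eq_constantCoeff_apply]; exact h.1
  have hρ0 : PowerSeries.constantCoeff (R := F2) ρ = 0 := by
    rw [← PowerSeries.coeff_zero_eq_constantCoeff_apply]; exact hρN.1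
  have hρ'0 : PowerSeries.constantCoeff (R := F2) ρ' = 0 := by
    rw [← PowerSeries.coeff_zero_eq_constantCoeff_apply]; exact hρ'N.1
  calc ngComp ρ σ = ngComp (ngComp ρ σ) (ngComp ρ ρ') := by rw [hρ', ngComp_X_right]
    _ = ngComp ρ (ngComp σ (ngComp ρ ρ')) := by
        rw [ngComp_assoc hσ0 (by rw [constantCoeff_ngComp]; exact hρ0)]
    _ = ngComp ρ (ngComp (ngComp σ ρ) ρ') := by rw [ngComp_assoc hρ0 hρ'0]
    _ = ngComp ρ ρ' := by rw [hρ, ngComp_X_left hρ'0]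
    _ = PowerSeries.X := hρ'
lemma two_eq_zero : (2 : PowerSeries F2) = 0 := by
  have := CharP.cast_eq_zero (PowerSeries F2) 2
  exact_mod_cast this

lemma odd_cast {N : ℕ} (h : ¬ Even N) : ((N : ℕ) : PowerSeries F2) = 1 := by
  obtain ⟨j, hj⟩ := Nat.not_even_iff_odd.mp h
  subst hj
  push_cast
  rw [two_eq_zero]
  ring

-- binomial estimate : (X + u)^N = X^N + N X^(N-1) u  mod  X^(N+m+1)
lemma binomTop {u : PowerSeries F2} (hu0 : PowerSeries.constantCoeff (R := F2) u = 0) {m : ℕ}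
    (hm1 : 1 ≤ m) (hu : (PowerSeries.X : PowerSeries F2) ^ (m+1) ∣ u) {N : ℕ} (hN : 1 ≤ N) :
    (PowerSeries.X : PowerSeries F2) ^ (N + m + 1) ∣
      (PowerSeries.X + u) ^ N - PowerSeries.X ^ N -
        ((N : ℕ) : PowerSeries F2) * PowerSeries.X ^ (N - 1) * u := by
  have hexp : (u + PowerSeries.X) ^ N =
      ∑ k ∈ range (N + 1), u ^ k * PowerSeries.X ^ (N - k) * ((N.choose k : ℕ) : PowerSeries F2) :=
    add_pow u PowerSeries.X N
  have hsplit : range (N + 1) = insert 0 (insert 1 (Finset.Ico 2 (N + 1))) := by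
    ext x
    simp only [Finset.mem_range, Finset.mem_insert, Finset.mem_Ico]
    omega
  have hrest : (PowerSeries.X : PowerSeries F2) ^ (N + m + 1) ∣
      ∑ k ∈ Finset.Ico 2 (N + 1),
        u ^ k * PowerSeries.X ^ (N - k) * ((N.choose k : ℕ) : PowerSeries F2) := by
    apply Finset.dvd_sum
    intro k hk
    simp only [Finset.mem_Ico] at hk
    have h1 : (PowerSeries.X : PowerSeries F2) ^ ((m+1)*k) ∣ u ^ k := by
      rw [pow_mul]
      exact pow_dvd_pow_of_dvd hu k
    have h2 : (PowerSeries.X : PowerSeries F2) ^ ((m+1)*k + (N - k)) ∣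
        u ^ k * PowerSeries.X ^ (N - k) := by
      rw [pow_add]
      exact mul_dvd_mul h1 dvd_rfl
    apply Dvd.dvd.mul_right
    refine dvd_trans (pow_dvd_pow _ ?_) h2
    have e1 : (m+1)*k = m*k + k := by ring
    have e2 : m*k ≥ m*2 := Nat.mul_le_mul_left m hk.1
    omega
  have hgoal : (PowerSeries.X + u) ^ N - PowerSeries.X ^ N -
      ((N : ℕ) : PowerSeries F2) * PowerSeries.X ^ (N - 1) * u =
      ∑ k ∈ Finset.Ico 2 (N + 1),
        u ^ k * PowerSeries.X ^ (N - k) * ((N.choose k : ℕ) : PowerSeries F2) := by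
    rw [show PowerSeries.X + u = u + PowerSeries.X from add_comm _ _, hexp, hsplit,
      Finset.sum_insert (by simp), Finset.sum_insert (by simp), pow_zero, one_mul,
      Nat.sub_zero, Nat.choose_zero_right, Nat.cast_one, mul_one, pow_one,
      Nat.choose_one_right]
    ring
  rw [hgoal]
  exact hrest

-- RIGIDITY
lemma rigidity {m μ N : ℕ} (hm2 : m + 1 = 2 ^ μ) (hm1 : 1 ≤ m) {σ' τ : PowerSeries F2}
    (hσ'0 : PowerSeries.constantCoeff (R := F2) σ' = 0) (hτ0 : PowerSeries.constantCoeff (R := F2) τ = 0)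
    (hs : (PowerSeries.X : PowerSeries F2) ^ (m+1) ∣ σ' - PowerSeries.X)
    (hu : (PowerSeries.X : PowerSeries F2) ^ (m+1) ∣ τ - PowerSeries.X)
    (hu1 : PowerSeries.coeff (R := F2) (m+1) (τ - PowerSeries.X) = 1)
    (heqσ : ngComp σ' σ' = PowerSeries.X) (heqτ : ngComp τ τ = PowerSeries.X)
    (hd : (PowerSeries.X : PowerSeries F2) ^ N ∣ σ' - τ) (hN : m + 2 ≤ N) (hodd : ¬ Even N) :
    (PowerSeries.X : PowerSeries F2) ^ (N + 1) ∣ σ' - τ := by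
  set s := σ' - PowerSeries.X with hsdef
  set u := τ - PowerSeries.X with hudef
  set d := σ' - τ with hddef
  -- shifted involution equations
  have hes : ngComp s σ' = s := by
    rw [hsdef, ngComp_sub_left, heqσ, ngComp_X_left hσ'0]
    rw [← CharTwo.neg_eq (σ' - PowerSeries.X)]
    ring
  have heu : ngComp u τ = u := by
    rw [hudef, ngComp_sub_left, heqτ, ngComp_X_left hτ0]
    rw [← CharTwo.neg_eq (τ - PowerSeries.X)]
    ring
  have hsu : s - d = u := by rw [hsdef, hudef, hddef]; ring
  -- master identity
  have hsu2 : s - u = d := by rw [hsdef, hudef, hddef]; ring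
  have EQ : d = (ngComp s σ' - ngComp s τ) + ngComp d τ := by
    have h1 : ngComp s τ - ngComp d τ = u := by rw [← ngComp_sub_left, hsu, heu]
    have h3 : (ngComp s σ' - ngComp s τ) + ngComp d τ =
        ngComp s σ' - (ngComp s τ - ngComp d τ) := by ring
    rw [h3, h1, hes, hsu2]
  set K := N + m with hK
  have hA : PowerSeries.coeff (R := F2) K (ngComp s σ' - ngComp s τ) = 0 := by
    rw [coeff_ngComp_sub]
    apply Finset.sum_eq_zero
    intro n hn
    rcases Nat.lt_or_ge n (m+1) with h1 | h1
    · rw [dvd_iff_coeff.mp hs n h1, zero_mul]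
    · rcases Nat.eq_or_lt_of_le h1 with h2 | h2
      · -- n = m+1 : Frobenius
        have : σ' ^ n - τ ^ n = d ^ n := by
          rw [hddef, ← h2, hm2, sub_pow_char_pow]
        rw [this, ← h2]
        have : (PowerSeries.X : PowerSeries F2) ^ (N * (m+1)) ∣ d ^ (m+1) := by
          rw [pow_mul]
          exact pow_dvd_pow_of_dvd hd (m+1)
        have hmul : N * (m+1) = N * m + N := by ring
        have hge : N * m ≥ N := Nat.le_mul_of_pos_right N (by omega)
        rw [dvd_iff_coeff.mp this K (by omega), mul_zero]
      · -- n ≥ m+2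
        have := powdiff hσ'0 hτ0 hd n
        rw [dvd_iff_coeff.mp this K (by omega), mul_zero]
  have hBsum : PowerSeries.coeff (R := F2) K (ngComp d τ - d) = PowerSeries.coeff (R := F2) N d := by
    conv_lhs => rw [show d = ngComp d PowerSeries.X from (ngComp_X_right d).symm]
    rw [show ngComp (ngComp d PowerSeries.X) τ = ngComp d τ from by rw [ngComp_X_right]]
    rw [coeff_ngComp_sub]
    rw [Finset.sum_eq_single N]
    · -- main term
      have hXu : PowerSeries.X + u = τ := by rw [hudef]; ring
      have hb := binomTop (u := u)
        (by rw [hudef, map_sub, hτ0, PowerSeries.constantCoeff_X, zero_sub,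
          CharTwo.neg_eq]) hm1 hu (by omega : 1 ≤ N)
      rw [hXu] at hb
      have hc : PowerSeries.coeff (R := F2) K (τ ^ N - PowerSeries.X ^ N) =
          PowerSeries.coeff (R := F2) K (((N : ℕ) : PowerSeries F2) * PowerSeries.X ^ (N-1) * u) :=
        coeff_eq_of_dvd hb (by omega)
      have hcc : PowerSeries.coeff (R := F2) K (PowerSeries.X ^ (N-1) * u) = 1 := by
        have h5 := PowerSeries.coeff_X_pow_mul u (N-1) (m+1)
        rw [show (m+1) + (N-1) = K from by omega] at h5
        rw [h5, hu1]
      rw [hc, odd_cast hodd, one_mul, hcc, mul_one]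
    · intro n hn hne
      rcases Nat.lt_or_ge n N with h1 | h1
      · rw [dvd_iff_coeff.mp hd n h1, zero_mul]
      · have hgt : N < n := by omega
        have := powdiff hτ0 (by simp) hu n
        rw [dvd_iff_coeff.mp this K (by omega), mul_zero]
    · intro hnot
      simp only [Finset.mem_range] at hnot
      omega
  -- combine
  have hcomb : PowerSeries.coeff (R := F2) N d = 0 := by
    have := congrArg (PowerSeries.coeff (R := F2) K) EQ
    rw [map_add, hA, zero_add] at this
    have h2 : PowerSeries.coeff (R := F2) K (ngComp d τ - d) = 0 := by
      rw [map_sub, ← this, sub_self]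
    rw [← hBsum, h2]
  apply dvd_iff_coeff.mpr
  intro k hk
  rcases Nat.lt_or_ge k N with h1 | h1
  · exact dvd_iff_coeff.mp hd k h1
  · have : k = N := by omega
    rw [this]
    exact hcomb

-- core estimate for the conjugation step at an even level
lemma adjust_core {m μ N : ℕ} (hm2 : m + 1 = 2 ^ μ) (hm1 : 1 ≤ m) {σ' τ : PowerSeries F2}
    (hσ'0 : PowerSeries.constantCoeff (R := F2) σ' = 0) (hτ0 : PowerSeries.constantCoeff (R := F2) τ = 0)
    (hs : (PowerSeries.X : PowerSeries F2) ^ (m+1) ∣ σ' - PowerSeries.X)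
    (hu : (PowerSeries.X : PowerSeries F2) ^ (m+1) ∣ τ - PowerSeries.X)
    (hu1 : PowerSeries.coeff (R := F2) (m+1) (τ - PowerSeries.X) = 1)
    (hd : (PowerSeries.X : PowerSeries F2) ^ N ∣ σ' - τ) (hN : m + 3 ≤ N) (heven : Even N)
    (hoddm : ¬ Even m) :
    (PowerSeries.X : PowerSeries F2) ^ (N + 1) ∣
      ngComp σ' (PowerSeries.X + PowerSeries.C (R := F2) (PowerSeries.coeff (R := F2) N (σ' - τ)) *
        PowerSeries.X ^ (N - m)) -
      ngComp (PowerSeries.X + PowerSeries.C (R := F2) (PowerSeries.coeff (R := F2) N (σ' - τ)) *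
        PowerSeries.X ^ (N - m)) τ := by
  set c := PowerSeries.coeff (R := F2) N (σ' - τ) with hc
  set φ := PowerSeries.X + PowerSeries.C (R := F2) c * PowerSeries.X ^ (N - m) with hφ
  have hφ0 : PowerSeries.constantCoeff (R := F2) φ = 0 := by
    rw [hφ, map_add, map_mul, map_pow, PowerSeries.constantCoeff_X, PowerSeries.constantCoeff_C]
    rw [zero_pow (by omega : N - m ≠ 0), mul_zero, add_zero]
  set s' := σ' - PowerSeries.X with hs'
  set u := τ - PowerSeries.X with hudef
  -- the two compositions with φ
  have e1 : ngComp σ' φ = φ + ngComp s' φ := by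
    rw [hs', ngComp_sub_left, ngComp_X_left hφ0]
    ring
  have e2 : ngComp φ τ = τ + PowerSeries.C (R := F2) c * τ ^ (N - m) := by
    rw [hφ, ngComp_add_left, ngComp_X_left hτ0, ngComp_mul_left hτ0, ngComp_C_left,
      ngComp_Xpow_left hτ0]
  -- piece 1 : X^(N+1) ∣ ngComp s' φ - s'
  have hφX : φ - PowerSeries.X = PowerSeries.C (R := F2) c * PowerSeries.X ^ (N - m) := by
    rw [hφ]; ring
  have hs'dvd : (PowerSeries.X : PowerSeries F2) ^ (m+1) ∣ s' := hs
  have P1 : (PowerSeries.X : PowerSeries F2) ^ (N + 1) ∣ ngComp s' φ - s' := by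
    have : ngComp s' φ - s' = ngComp s' φ - ngComp s' PowerSeries.X := by
      rw [ngComp_X_right]
    rw [this]
    apply dvd_iff_coeff.mpr
    intro j hj
    rw [coeff_ngComp_sub]
    apply Finset.sum_eq_zero
    intro n hn
    rcases Nat.lt_or_ge n (m+1) with h1 | h1
    · rw [dvd_iff_coeff.mp hs'dvd n h1, zero_mul]
    · rcases Nat.eq_or_lt_of_le h1 with h2 | h2
      · -- n = m + 1 : Frobenius
        have hfrob : φ ^ n - PowerSeries.X ^ n =
            (PowerSeries.C (R := F2) c * PowerSeries.X ^ (N - m)) ^ n := by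
          rw [← h2, hφ, hm2, add_pow_char_pow, add_sub_cancel_left]
        have hdvd2 : (PowerSeries.X : PowerSeries F2) ^ ((N-m)*(m+1)) ∣
            (PowerSeries.C (R := F2) c * PowerSeries.X ^ (N - m)) ^ n := by
          rw [mul_pow, ← h2, ← pow_mul]
          exact Dvd.dvd.mul_left (dvd_of_eq (by rw [Nat.mul_comm])) _
        have hbig : j < (N-m)*(m+1) := by
          have e3 : (N-m)*(m+1) = (N-m)*m + (N-m) := by ring
          have e4 : (N-m)*m ≥ 3*m := Nat.mul_le_mul_right m (by omega)
          omega
        rw [hfrob, dvd_iff_coeff.mp hdvd2 j hbig, mul_zero]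
      · -- n ≥ m+2
        have hdφ : (PowerSeries.X : PowerSeries F2) ^ (N - m) ∣ φ - PowerSeries.X := by
          rw [hφX]
          exact Dvd.dvd.mul_left dvd_rfl _
        have := powdiff hφ0 (by simp) hdφ n
        rw [dvd_iff_coeff.mp this j (by omega), mul_zero]
  -- piece 2 : X^(N+1) ∣ (σ' - τ) - C c * X^N
  have P2 : (PowerSeries.X : PowerSeries F2) ^ (N + 1) ∣
      (σ' - τ) - PowerSeries.C (R := F2) c * PowerSeries.X ^ N := by
    apply dvd_of_coeff_eq
    intro k hk
    rcases Nat.lt_or_ge k N with h1 | h1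
    · rw [dvd_iff_coeff.mp hd k h1, PowerSeries.coeff_C_mul, PowerSeries.coeff_X_pow,
        if_neg (by omega), mul_zero]
    · have : k = N := by omega
      subst this
      rw [← hc, PowerSeries.coeff_C_mul, PowerSeries.coeff_X_pow, if_pos rfl, mul_one]
  -- piece 3 : X^(N+1) ∣ C c * X^N - C c * (τ^(N-m) - X^(N-m))
  have P3 : (PowerSeries.X : PowerSeries F2) ^ (N + 1) ∣
      PowerSeries.C (R := F2) c * PowerSeries.X ^ N -
        PowerSeries.C (R := F2) c * (τ ^ (N - m) - PowerSeries.X ^ (N - m)) := by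
    have hb := binomTop (u := u)
      (by rw [hudef, map_sub, hτ0, PowerSeries.constantCoeff_X, zero_sub, CharTwo.neg_eq])
      hm1 hu (by omega : 1 ≤ N - m)
    rw [show PowerSeries.X + u = τ from by rw [hudef]; ring] at hb
    rw [show (N - m) + m + 1 = N + 1 from by omega] at hb
    have hodd2 : ¬ Even (N - m) := by
      obtain ⟨cm, hcm⟩ := Nat.not_even_iff_odd.mp hoddm
      rcases heven with ⟨a, ha⟩
      intro ⟨b, hb2⟩
      omega
    rw [odd_cast hodd2, one_mul] at hb
    -- hb : X^(N+1) ∣ τ^(N-m) - X^(N-m) - X^(N-m-1) * u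
    have hbridge : (PowerSeries.X : PowerSeries F2) ^ (N + 1) ∣
        PowerSeries.X ^ (N - m - 1) * u - PowerSeries.X ^ N := by
      apply dvd_of_coeff_eq
      intro k hk
      rcases Nat.lt_or_ge k (N - m - 1) with h1 | h1
      · rw [PowerSeries.coeff_X_pow_mul' u (N-m-1) k, if_neg (by omega),
          PowerSeries.coeff_X_pow, if_neg (by omega)]
      · rw [PowerSeries.coeff_X_pow_mul' u (N-m-1) k, if_pos h1, PowerSeries.coeff_X_pow]
        rcases Nat.lt_or_ge (k - (N - m - 1)) (m + 1) with h2 | h2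
        · rw [dvd_iff_coeff.mp hu _ h2, if_neg (by omega)]
        · have hkN : k = N := by omega
          rw [if_pos hkN, hkN, show N - (N - m - 1) = m + 1 from by omega, hu1]
    have comb : PowerSeries.C (R := F2) c * PowerSeries.X ^ N -
        PowerSeries.C (R := F2) c * (τ ^ (N - m) - PowerSeries.X ^ (N - m)) =
        (PowerSeries.C (R := F2) c) * (PowerSeries.X ^ N - PowerSeries.X ^ (N - m - 1) * u) -
        (PowerSeries.C (R := F2) c) *
          (τ ^ (N - m) - PowerSeries.X ^ (N - m) - PowerSeries.X ^ (N - m - 1) * u) := by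
      ring
    rw [comb]
    apply dvd_sub
    · exact Dvd.dvd.mul_left (by
        have := (dvd_neg (α := PowerSeries F2)).mpr hbridge
        rw [neg_sub] at this
        exact this) _
    · exact Dvd.dvd.mul_left hb _
  -- assemble
  have final : ngComp σ' φ - ngComp φ τ =
      (ngComp s' φ - s') + ((σ' - τ) - PowerSeries.C (R := F2) c * PowerSeries.X ^ N) +
      (PowerSeries.C (R := F2) c * PowerSeries.X ^ N -
        PowerSeries.C (R := F2) c * (τ ^ (N - m) - PowerSeries.X ^ (N - m))) := by
    rw [e1, e2, hφ, hs']
    ring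
  rw [final]
  exact dvd_add (dvd_add P1 P2) P3

-- the elementary conjugator at level N
noncomputable def elconj (m N : ℕ) (σ' τ : PowerSeries F2) : PowerSeries F2 :=
  PowerSeries.X + PowerSeries.C (R := F2) (PowerSeries.coeff (R := F2) N (σ' - τ)) * PowerSeries.X ^ (N - m)

lemma elconj_isNott {m N : ℕ} (h : m + 2 ≤ N) (σ' τ : PowerSeries F2) :
    IsNott (elconj m N σ' τ) := by
  constructor
  · rw [elconj, map_add, PowerSeries.coeff_zero_X, PowerSeries.coeff_C_mul,
      PowerSeries.coeff_X_pow, if_neg (by omega), mul_zero, add_zero]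
  · rw [elconj, map_add, PowerSeries.coeff_one_X, PowerSeries.coeff_C_mul,
      PowerSeries.coeff_X_pow, if_neg (by omega), mul_zero, add_zero]

-- one full approximation step
noncomputable def conjSeq (m : ℕ) (τ σ : PowerSeries F2) : ℕ → PowerSeries F2 × PowerSeries F2
  | 0 => (σ, PowerSeries.X)
  | k+1 =>
    let p := conjSeq m τ σ k
    if Even (m + 2 + k) then
      let φ := elconj m (m + 2 + k) p.1 τ
      (ngComp (ngInv φ) (ngComp p.1 φ), ngComp p.2 φ)
    else p

theorem conjugacy {m μ : ℕ} (hm2 : m + 1 = 2 ^ μ) (hm1 : 1 ≤ m) (hoddm : ¬ Even m)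
    {σ τ : PowerSeries F2} (hσN : IsNott σ) (hτN : IsNott τ)
    (heqσ : ngComp σ σ = PowerSeries.X) (heqτ : ngComp τ τ = PowerSeries.X)
    (hsd : (PowerSeries.X : PowerSeries F2) ^ (m+1) ∣ σ - PowerSeries.X)
    (hud : (PowerSeries.X : PowerSeries F2) ^ (m+1) ∣ τ - PowerSeries.X)
    (hs1 : PowerSeries.coeff (R := F2) (m+1) (σ - PowerSeries.X) = 1)
    (hu1 : PowerSeries.coeff (R := F2) (m+1) (τ - PowerSeries.X) = 1) :
    ∃ ψ : PowerSeries F2, IsNott ψ ∧ ngComp σ ψ = ngComp ψ τ := by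
  have hτ0 : PowerSeries.constantCoeff (R := F2) τ = 0 := by
    rw [← PowerSeries.coeff_zero_eq_constantCoeff_apply]; exact hτN.1
  have hσ0 : PowerSeries.constantCoeff (R := F2) σ = 0 := by
    rw [← PowerSeries.coeff_zero_eq_constantCoeff_apply]; exact hσN.1
  -- the invariant
  have main : ∀ k,
      PowerSeries.constantCoeff (R := F2) (conjSeq m τ σ k).1 = 0 ∧
      ngComp (conjSeq m τ σ k).1 (conjSeq m τ σ k).1 = PowerSeries.X ∧
      ((PowerSeries.X : PowerSeries F2) ^ (m + 2 + k) ∣ (conjSeq m τ σ k).1 - τ) ∧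
      IsNott (conjSeq m τ σ k).2 ∧
      ngComp σ (conjSeq m τ σ k).2 = ngComp (conjSeq m τ σ k).2 (conjSeq m τ σ k).1 := by
    intro k
    induction k with
    | zero =>
      have hc0 : conjSeq m τ σ 0 = (σ, PowerSeries.X) := rfl
      rw [hc0]
      refine ⟨hσ0, heqσ, ?_, ⟨by simp, by simp⟩, ?_⟩
      · -- base closeness
        apply dvd_of_coeff_eq
        intro j hj
        rcases Nat.lt_or_ge j (m+1) with h1 | h1
        · have e1 := dvd_iff_coeff.mp hsd j h1
          have e2 := dvd_iff_coeff.mp hud j h1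
          rw [map_sub, sub_eq_zero] at e1 e2
          show PowerSeries.coeff (R := F2) j σ = PowerSeries.coeff (R := F2) j τ
          rw [e1, e2]
        · have hj1 : j = m + 1 := by omega
          subst hj1
          have e1 : PowerSeries.coeff (R := F2) (m+1) σ =
              1 + PowerSeries.coeff (R := F2) (m+1) (PowerSeries.X : PowerSeries F2) := by
            rw [← hs1, map_sub]; ring
          have e2 : PowerSeries.coeff (R := F2) (m+1) τ =
              1 + PowerSeries.coeff (R := F2) (m+1) (PowerSeries.X : PowerSeries F2) := by
            rw [← hu1, map_sub]; ring
          show PowerSeries.coeff (R := F2) (m+1) σ = PowerSeries.coeff (R := F2) (m+1) τ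
          rw [e1, e2]
      · show ngComp σ PowerSeries.X = ngComp PowerSeries.X σ
        rw [ngComp_X_right, ngComp_X_left hσ0]
    | succ k ih =>
      obtain ⟨ih0, ihinv, ihd, ihψ, ihtw⟩ := ih
      set σ' := (conjSeq m τ σ k).1 with hσ'def
      set ψ := (conjSeq m τ σ k).2 with hψdef
      set N := m + 2 + k with hN
      -- common facts for σ'
      have hs'dvd : (PowerSeries.X : PowerSeries F2) ^ (m+1) ∣ σ' - PowerSeries.X := by
        have : σ' - PowerSeries.X = (σ' - τ) + (τ - PowerSeries.X) := by ring
        rw [this]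
        exact dvd_add (dvd_trans (pow_dvd_pow _ (by omega)) ihd) hud
      by_cases hpar : Even N
      · -- even level : conjugate
        have hstep : conjSeq m τ σ (k+1) =
            (ngComp (ngInv (elconj m N σ' τ)) (ngComp σ' (elconj m N σ' τ)),
              ngComp ψ (elconj m N σ' τ)) := by
          show (if Even (m + 2 + k) then _ else _) = _
          rw [if_pos hpar]
        set φ := elconj m N σ' τ with hφdef
        have hφN : IsNott φ := elconj_isNott (by omega) σ' τ
        have hφ0 : PowerSeries.constantCoeff (R := F2) φ = 0 := by
          rw [← PowerSeries.coeff_zero_eq_constantCoeff_apply]; exact hφN.1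
        obtain ⟨hρN, hφρ⟩ := ngInv_spec hφN
        have hρφ : ngComp (ngInv φ) φ = PowerSeries.X := ngInv_left hφN
        have hρ0 : PowerSeries.constantCoeff (R := F2) (ngInv φ) = 0 := by
          rw [← PowerSeries.coeff_zero_eq_constantCoeff_apply]; exact hρN.1
        set ρ := ngInv φ with hρdef
        set σ'' := ngComp ρ (ngComp σ' φ) with hσ''def
        have hcσ'φ : PowerSeries.constantCoeff (R := F2) (ngComp σ' φ) = 0 := by
          rw [constantCoeff_ngComp]; exact ih0
        have hσ''0 : PowerSeries.constantCoeff (R := F2) σ'' = 0 := by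
          rw [hσ''def, constantCoeff_ngComp]; exact hρ0
        have h4 : ngComp φ σ'' = ngComp σ' φ := by
          rw [hσ''def, ← ngComp_assoc hρ0 hcσ'φ, hφρ, ngComp_X_left hcσ'φ]
        have hinv'' : ngComp σ'' σ'' = PowerSeries.X := by
          have e1 : ngComp (ngComp σ' φ) σ'' = φ := by
            rw [ngComp_assoc hφ0 hσ''0, h4, ← ngComp_assoc ih0 hφ0, ihinv,
              ngComp_X_left hφ0]
          rw [hσ''def, ngComp_assoc hcσ'φ hσ''0]
          rw [show ngComp (ngComp σ' φ) σ'' = φ from e1]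
          exact hρφ
        -- divisibility
        have hN3 : m + 3 ≤ N := by
          rcases hpar with ⟨a, ha⟩
          obtain ⟨cm, hcm⟩ := Nat.not_even_iff_odd.mp hoddm
          omega
        have hcore := adjust_core hm2 hm1 ih0 hτ0 hs'dvd hud hu1 ihd hN3 hpar hoddm
        have hφform : ∀ a : PowerSeries F2, PowerSeries.constantCoeff (R := F2) a = 0 →
            ngComp φ a = a + PowerSeries.C (R := F2) (PowerSeries.coeff (R := F2) N (σ' - τ)) * a ^ (N - m) := by
          intro a ha
          rw [hφdef, elconj, ngComp_add_left, ngComp_X_left ha, ngComp_mul_left ha,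
            ngComp_C_left, ngComp_Xpow_left ha]
        have hdvd1 : (PowerSeries.X : PowerSeries F2) ^ (N+1) ∣ ngComp φ σ'' - ngComp φ τ := by
          rw [h4]
          exact hcore
        set c := PowerSeries.coeff (R := F2) N (σ' - τ) with hcdef
        have hfact : ngComp φ σ'' - ngComp φ τ = (σ'' - τ) *
            (1 + PowerSeries.C (R := F2) c *
              ∑ i ∈ range (N - m), σ'' ^ i * τ ^ (N - m - 1 - i)) := by
          rw [hφform σ'' hσ''0, hφform τ hτ0]
          have := geom_sum₂_mul σ'' τ (N - m)
          calc σ'' + PowerSeries.C (R := F2) c * σ'' ^ (N-m) - (τ + PowerSeries.C (R := F2) c * τ ^ (N-m))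
              = (σ'' - τ) + PowerSeries.C (R := F2) c * (σ'' ^ (N-m) - τ ^ (N-m)) := by ring
            _ = (σ'' - τ) + PowerSeries.C (R := F2) c *
                ((∑ i ∈ range (N - m), σ'' ^ i * τ ^ (N - m - 1 - i)) * (σ'' - τ)) := by
                rw [this]
            _ = (σ'' - τ) * (1 + PowerSeries.C (R := F2) c *
                ∑ i ∈ range (N - m), σ'' ^ i * τ ^ (N - m - 1 - i)) := by ring
        have hunit : IsUnit (1 + PowerSeries.C (R := F2) c *
            ∑ i ∈ range (N - m), σ'' ^ i * τ ^ (N - m - 1 - i)) := by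
          rw [PowerSeries.isUnit_iff_constantCoeff]
          have hG : PowerSeries.constantCoeff (R := F2)
              (∑ i ∈ range (N - m), σ'' ^ i * τ ^ (N - m - 1 - i)) = 0 := by
            rw [map_sum]
            apply Finset.sum_eq_zero
            intro i hi
            simp only [Finset.mem_range] at hi
            rw [map_mul, map_pow, map_pow, hσ''0, hτ0]
            rcases Nat.eq_zero_or_pos i with h | h
            · subst h
              rw [pow_zero, one_mul, zero_pow (by omega : N - m - 1 - 0 ≠ 0)]
            · rw [zero_pow (by omega : i ≠ 0), zero_mul]
          rw [map_add, map_one, map_mul, hG, mul_zero, add_zero]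
          exact isUnit_one
        have hdvd2 : (PowerSeries.X : PowerSeries F2) ^ (N+1) ∣ σ'' - τ := by
          obtain ⟨W, hW⟩ := hunit.exists_right_inv
          have : σ'' - τ = ((σ'' - τ) * (1 + PowerSeries.C (R := F2) c *
              ∑ i ∈ range (N - m), σ'' ^ i * τ ^ (N - m - 1 - i))) * W := by
            rw [mul_assoc, hW, mul_one]
          rw [this, ← hfact]
          exact Dvd.dvd.mul_right hdvd1 W
        -- intertwining
        have htw' : ngComp σ (ngComp ψ φ) = ngComp (ngComp ψ φ) σ'' := by
          have hψ0 : PowerSeries.constantCoeff (R := F2) ψ = 0 := by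
            rw [← PowerSeries.coeff_zero_eq_constantCoeff_apply]; exact ihψ.1
          rw [← ngComp_assoc hψ0 hφ0, ihtw, ngComp_assoc ih0 hφ0, ← h4,
            ← ngComp_assoc hφ0 hσ''0]
        refine ⟨?_, ?_, ?_, ?_, ?_⟩
        · rw [hstep]; exact hσ''0
        · rw [hstep]; exact hinv''
        · rw [hstep]
          show (PowerSeries.X : PowerSeries F2) ^ (m + 2 + (k+1)) ∣ σ'' - τ
          rw [show m + 2 + (k + 1) = N + 1 from by omega]
          exact hdvd2
        · rw [hstep]
          exact isNott_ngComp ihψ hφN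
        · rw [hstep]
          exact htw'
      · -- odd level : rigidity
        have hstep : conjSeq m τ σ (k+1) = (σ', ψ) := by
          show (if Even (m + 2 + k) then _ else _) = _
          rw [if_neg hpar]
        have hdvd : (PowerSeries.X : PowerSeries F2) ^ (N+1) ∣ σ' - τ :=
          rigidity hm2 hm1 ih0 hτ0 hs'dvd hud hu1 ihinv heqτ ihd (by omega) hpar
        refine ⟨?_, ?_, ?_, ?_, ?_⟩
        · rw [hstep]; exact ih0
        · rw [hstep]; exact ihinv
        · rw [hstep]
          show (PowerSeries.X : PowerSeries F2) ^ (m + 2 + (k+1)) ∣ σ' - τ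
          rw [show m + 2 + (k + 1) = N + 1 from by omega]
          exact hdvd
        · rw [hstep]; exact ihψ
        · rw [hstep]; exact ihtw
  -- stabilization of the second component
  have hstab : ∀ k, (PowerSeries.X : PowerSeries F2) ^ (k+1) ∣
      (conjSeq m τ σ (k+1)).2 - (conjSeq m τ σ k).2 := by
    intro k
    by_cases hpar : Even (m + 2 + k)
    · have hstep : conjSeq m τ σ (k+1) =
          (ngComp (ngInv (elconj m (m + 2 + k) (conjSeq m τ σ k).1 τ))
            (ngComp (conjSeq m τ σ k).1 (elconj m (m + 2 + k) (conjSeq m τ σ k).1 τ)),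
           ngComp (conjSeq m τ σ k).2 (elconj m (m + 2 + k) (conjSeq m τ σ k).1 τ)) := by
        show (if Even (m + 2 + k) then _ else _) = _
        rw [if_pos hpar]
      rw [hstep]
      have hφX : (PowerSeries.X : PowerSeries F2) ^ (k + 2) ∣
          elconj m (m + 2 + k) (conjSeq m τ σ k).1 τ - PowerSeries.X := by
        rw [elconj, add_sub_cancel_left]
        rw [show m + 2 + k - m = k + 2 from by omega]
        exact Dvd.dvd.mul_left dvd_rfl _
      have := ngComp_congr_right hφX (conjSeq m τ σ k).2
      rw [ngComp_X_right] at this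
      exact dvd_trans (pow_dvd_pow _ (by omega)) this
    · have hstep : conjSeq m τ σ (k+1) = conjSeq m τ σ k := by
        show (if Even (m + 2 + k) then _ else _) = _
        rw [if_neg hpar]
      rw [hstep, sub_self]
      exact dvd_zero _
  -- the limit
  set ψ := glim (fun k => (conjSeq m τ σ k).2) with hψ
  have hψk := glim_spec hstab
  have hψN : IsNott ψ := by
    constructor
    · have := coeff_eq_of_dvd (hψk 0) (show 0 < 1 by omega)
      rw [this]
      exact (main 0).2.2.2.1.1
    · have := coeff_eq_of_dvd (hψk 1) (show 1 < 2 by omega)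
      rw [this]
      exact (main 1).2.2.2.1.2
  refine ⟨ψ, hψN, ?_⟩
  apply eq_of_forall_dvd
  intro M
  rcases Nat.eq_zero_or_pos M with h | h
  · subst h; simp
  obtain ⟨k, rfl⟩ : ∃ k, M = k + 1 := ⟨M - 1, by omega⟩
  obtain ⟨h0k, hinvk, hdk, hψNk, htwk⟩ := main k
  have p1 : (PowerSeries.X : PowerSeries F2) ^ (k+1) ∣
      ngComp σ ψ - ngComp σ (conjSeq m τ σ k).2 := ngComp_congr_right (hψk k) σ
  have p3 : (PowerSeries.X : PowerSeries F2) ^ (k+1) ∣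
      ngComp (conjSeq m τ σ k).2 τ - ngComp ψ τ := by
    have := ngComp_congr_left (hψk k) τ
    have h2 := (dvd_neg (α := PowerSeries F2)).mpr this
    rw [neg_sub] at h2
    exact h2
  have p2 : (PowerSeries.X : PowerSeries F2) ^ (k+1) ∣
      ngComp σ (conjSeq m τ σ k).2 - ngComp (conjSeq m τ σ k).2 τ := by
    rw [htwk]
    exact dvd_trans (pow_dvd_pow _ (by omega)) (ngComp_congr_right hdk _)
  have comb : ngComp σ ψ - ngComp ψ τ =
      (ngComp σ ψ - ngComp σ (conjSeq m τ σ k).2) +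
      (ngComp σ (conjSeq m τ σ k).2 - ngComp (conjSeq m τ σ k).2 τ) +
      (ngComp (conjSeq m τ σ k).2 τ - ngComp ψ τ) := by ring
  rw [comb]
  exact dvd_add (dvd_add p1 p2) p3
open scoped Classical
-- exponents of σ_{S,m} : E 0 = 2q, E (k+1) = q (E k + 1), q = 2^(μ-1)
def Ee (q : ℕ) : ℕ → ℕ
  | 0 => 2 * q
  | k + 1 => q * (Ee q k + 1)

lemma Ee_lb {q : ℕ} (hq : 2 ≤ q) : ∀ k, 2 ^ (k + 2) ≤ Ee q k := by
  intro k
  induction k with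
  | zero => simpa [Ee] using by omega
  | succ k ih =>
    have : Ee q (k+1) = q * Ee q k + q := by rw [Ee]; ring
    have h2 : 2 * Ee q k ≤ q * Ee q k := Nat.mul_le_mul_right _ hq
    calc 2 ^ (k + 3) = 2 * 2 ^ (k+2) := by ring
      _ ≤ 2 * Ee q k := by omega
      _ ≤ q * Ee q k := h2
      _ ≤ Ee q (k+1) := by omega

lemma Ee_ge {q : ℕ} (hq : 2 ≤ q) (k : ℕ) : 2 * q ≤ Ee q k := by
  induction k with
  | zero => simp [Ee]
  | succ k ih =>
    have : Ee q (k+1) = q * Ee q k + q := by rw [Ee]; ring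
    have h2 : 2 * Ee q k ≤ q * Ee q k := Nat.mul_le_mul_right _ hq
    omega

lemma Ee_strictMono {q : ℕ} (hq : 2 ≤ q) : StrictMono (Ee q) := by
  apply strictMono_nat_of_lt_succ
  intro k
  have h0 : 2 * q ≤ Ee q k := Ee_ge hq k
  have : Ee q (k+1) = q * Ee q k + q := by rw [Ee]; ring
  have h2 : 2 * Ee q k ≤ q * Ee q k := Nat.mul_le_mul_right _ hq
  omega

lemma Ee_ge_self {q : ℕ} (hq : 2 ≤ q) (k : ℕ) : k ≤ Ee q k :=
  le_trans (le_of_lt (Nat.lt_two_pow_self (n := k))) (le_trans (Nat.pow_le_pow_right (by omega) (by omega))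
    (Ee_lb hq k))

-- the ℚ-formula produces exactly the numbers Ee q j
lemma bridge {μ m q : ℕ} (hμ : 2 ≤ μ) (hq : q = 2 ^ (μ - 1)) (hm : m + 1 = 2 * q) :
    ∀ j : ℕ, (((m : ℚ) + 1) / ((m : ℚ) - 1)) * ((m : ℚ) * ((q : ℚ)) ^ j - 1) =
      (Ee q j : ℚ) := by
  have hq2 : 2 ≤ q := by
    rw [hq]
    calc 2 = 2 ^ 1 := (pow_one 2).symm
    _ ≤ 2 ^ (μ - 1) := Nat.pow_le_pow_right (by omega) (by omega)
  have hm3 : 3 ≤ m := by omega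
  have hmQ : (m : ℚ) = 2 * (q : ℚ) - 1 := by
    have : (m : ℚ) + 1 = 2 * (q : ℚ) := by exact_mod_cast congrArg (Nat.cast : ℕ → ℚ) hm
    linarith
  have hne : (m : ℚ) - 1 ≠ 0 := by
    have : (3 : ℚ) ≤ (m : ℚ) := by exact_mod_cast hm3
    intro h; linarith
  have hqne : (q : ℚ) - 1 ≠ 0 := by
    have : (2 : ℚ) ≤ (q : ℚ) := by exact_mod_cast hq2
    intro h; linarith
  have key : ∀ j : ℕ, ((m : ℚ) + 1) * ((m : ℚ) * ((q : ℚ)) ^ j - 1) =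
      (Ee q j : ℚ) * ((m : ℚ) - 1) := by
    intro j
    induction j with
    | zero =>
      rw [pow_zero, mul_one, show ((Ee q 0 : ℕ) : ℚ) = 2 * (q : ℚ) from by
        show ((2 * q : ℕ) : ℚ) = _; push_cast; ring, hmQ]
      ring
    | succ j ih =>
      have hrec : ((Ee q (j+1) : ℕ) : ℚ) = (q : ℚ) * ((Ee q j : ℚ) + 1) := by
        show ((q * (Ee q j + 1) : ℕ) : ℚ) = _
        push_cast
        ring
      rw [hrec, hmQ] at *
      linear_combination (q : ℚ) * ih
  intro j
  rw [div_mul_eq_mul_div, div_eq_iff hne]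
  exact key j

section Sigma

variable {μ m q : ℕ} (hμ : 2 ≤ μ) (hq : q = 2 ^ (μ - 1)) (hm : m + 1 = 2 * q)

lemma hq2' (hμ : 2 ≤ μ) (hq : q = 2 ^ (μ - 1)) : 2 ≤ q := by
  rw [hq]
  calc 2 = 2 ^ 1 := (pow_one 2).symm
  _ ≤ 2 ^ (μ - 1) := Nat.pow_le_pow_right (by omega) (by omega)

include hμ hq hm in
lemma sigma_coeff (n : ℕ) :
    PowerSeries.coeff (R := F2) n (sigmaSm m) =
      if n = 1 ∨ ∃ j : ℕ, n = Ee q j then 1 else 0 := by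
  have hq2 : 2 ≤ q := hq2' hμ hq
  have hhalf : ((m : ℚ) + 1) / 2 = (q : ℚ) := by
    have : (m : ℚ) + 1 = 2 * (q : ℚ) := by exact_mod_cast congrArg (Nat.cast : ℕ → ℚ) hm
    rw [this]; ring
  have hiff : (n = 1 ∨ ∃ k : ℕ, 1 ≤ k ∧
      (n : ℚ) = (((m : ℚ) + 1) / ((m : ℚ) - 1)) *
        ((m : ℚ) * (((m : ℚ) + 1) / 2) ^ (k - 1) - 1)) ↔
      (n = 1 ∨ ∃ j : ℕ, n = Ee q j) := by
    constructor
    · rintro (h | ⟨k, hk1, hkE⟩)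
      · exact Or.inl h
      · right
        refine ⟨k - 1, ?_⟩
        have := bridge hμ hq hm (k - 1)
        rw [hhalf, this] at hkE
        exact_mod_cast hkE
    · rintro (h | ⟨j, hj⟩)
      · exact Or.inl h
      · right
        refine ⟨j + 1, by omega, ?_⟩
        rw [hhalf, show j + 1 - 1 = j from rfl, bridge hμ hq hm j]
        exact_mod_cast congrArg (Nat.cast : ℕ → ℚ) hj
  rw [sigmaSm, PowerSeries.coeff_mk]
  exact if_congr hiff rfl rfl

-- the tail series S
noncomputable def Sser (q : ℕ) : PowerSeries F2 :=
  PowerSeries.mk fun n => if ∃ j : ℕ, n = Ee q j then 1 else 0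

lemma coeff_Sser (n : ℕ) :
    PowerSeries.coeff (R := F2) n (Sser q) = if ∃ j : ℕ, n = Ee q j then 1 else 0 :=
  PowerSeries.coeff_mk _ _

include hμ hq hm in
lemma sigma_split : sigmaSm m = PowerSeries.X + Sser q := by
  have hq2 : 2 ≤ q := hq2' hμ hq
  ext n
  rw [sigma_coeff hμ hq hm, map_add, PowerSeries.coeff_X, coeff_Sser]
  by_cases h1 : n = 1
  · rw [if_pos (Or.inl h1), if_pos h1, if_neg, add_zero]
    rintro ⟨j, hj⟩
    have := Ee_ge hq2 j
    omega
  · rw [if_neg h1]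
    by_cases h2 : ∃ j : ℕ, n = Ee q j
    · rw [if_pos (Or.inr h2), if_pos h2, zero_add]
    · rw [if_neg (by tauto), if_neg h2, zero_add]

lemma Sser0 (hq2 : 2 ≤ q) : PowerSeries.constantCoeff (R := F2) (Sser q) = 0 := by
  rw [← PowerSeries.coeff_zero_eq_constantCoeff_apply, coeff_Sser, if_neg]
  rintro ⟨j, hj⟩
  have := Ee_ge hq2 j
  omega

-- partial sums
noncomputable def Spart (q N : ℕ) : PowerSeries F2 :=
  ∑ j ∈ range N, (PowerSeries.X : PowerSeries F2) ^ (Ee q j)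

lemma coeff_Spart (hq2 : 2 ≤ q) (N n : ℕ) :
    PowerSeries.coeff (R := F2) n (Spart q N) = if ∃ j : ℕ, j < N ∧ n = Ee q j then 1 else 0 := by
  induction N with
  | zero =>
    rw [Spart, Finset.range_zero, Finset.sum_empty, map_zero, if_neg]
    rintro ⟨j, hj, _⟩
    omega
  | succ N ih =>
    rw [Spart, Finset.sum_range_succ, map_add, ← Spart, ih, PowerSeries.coeff_X_pow]
    by_cases hE : n = Ee q N
    · have hnoj : ¬∃ j, j < N ∧ n = Ee q j := by
        rintro ⟨j, hj, hje⟩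
        have := (Ee_strictMono hq2).lt_iff_lt.mpr (show j < N from hj)
        omega
      rw [if_neg hnoj, if_pos hE, if_pos ⟨N, Nat.lt_succ_self N, hE⟩, zero_add]
    · rw [if_neg hE]
      by_cases hex : ∃ j : ℕ, j < N ∧ n = Ee q j
      · rw [if_pos hex, if_pos (by obtain ⟨j, hj, hje⟩ := hex; exact ⟨j, by omega, hje⟩), add_zero]
      · rw [if_neg hex, if_neg, add_zero]
        rintro ⟨j, hj, hje⟩
        rcases Nat.lt_or_ge j N with h | h
        · exact hex ⟨j, h, hje⟩
        · have : j = N := by omega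
          subst this
          exact hE hje

lemma S_approx (hq2 : 2 ≤ q) (N : ℕ) :
    (PowerSeries.X : PowerSeries F2) ^ (Ee q N) ∣ Sser q - Spart q N := by
  apply dvd_iff_coeff.mpr
  intro k hk
  rw [map_sub, coeff_Sser, coeff_Spart hq2, sub_eq_zero]
  by_cases h : ∃ j : ℕ, k = Ee q j
  · obtain ⟨j, hj⟩ := h
    have hjN : j < N := by
      by_contra hge
      have := (Ee_strictMono hq2).le_iff_le.mpr (show N ≤ j by omega)
      omega
    rw [if_pos ⟨j, hj⟩, if_pos ⟨j, hjN, hj⟩]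
  · rw [if_neg h, if_neg (by rintro ⟨j, _, hje⟩; exact h ⟨j, hje⟩)]

lemma Spart_rec (hμ : 2 ≤ μ) (hq : q = 2 ^ (μ - 1)) (N : ℕ) :
    Spart q (N + 1) = (PowerSeries.X : PowerSeries F2) ^ (2 * q) +
      (PowerSeries.X * Spart q N) ^ q := by
  have hfr : (PowerSeries.X * Spart q N) ^ q =
      ∑ j ∈ range N, (PowerSeries.X : PowerSeries F2) ^ (Ee q (j + 1)) := by
    rw [mul_pow, Spart, hq, sum_pow_char_pow]
    rw [Finset.mul_sum]
    apply Finset.sum_congr rfl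
    intro j _
    rw [← pow_mul, ← pow_add]
    congr 1
    show 2 ^ (μ-1) + Ee (2^(μ-1)) j * 2 ^ (μ-1) = Ee (2^(μ-1)) (j+1)
    rw [show Ee (2^(μ-1)) (j+1) = 2^(μ-1) * (Ee (2^(μ-1)) j + 1) from rfl]
    ring
  rw [hfr, Spart, Finset.sum_range_succ']
  rw [show Ee q 0 = 2 * q from rfl]
  rw [add_comm]

lemma FE (hμ : 2 ≤ μ) (hq : q = 2 ^ (μ - 1)) :
    Sser q = (PowerSeries.X : PowerSeries F2) ^ (2 * q) + (PowerSeries.X * Sser q) ^ q := by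
  have hq2 : 2 ≤ q := hq2' hμ hq
  apply eq_of_forall_dvd
  intro M
  have hME : M ≤ Ee q M := Ee_ge_self hq2 M
  refine dvd_trans (pow_dvd_pow _ hME) ?_
  have h1 : (PowerSeries.X : PowerSeries F2) ^ (Ee q M) ∣ Sser q - Spart q (M+1) := by
    refine dvd_trans (pow_dvd_pow _ ?_) (S_approx hq2 (M+1))
    exact le_of_lt ((Ee_strictMono hq2) (Nat.lt_succ_self M))
  have h2 : (PowerSeries.X : PowerSeries F2) ^ (Ee q M) ∣
      (PowerSeries.X * Spart q M) ^ q - (PowerSeries.X * Sser q) ^ q := by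
    have hsub : (PowerSeries.X * Spart q M) ^ q - (PowerSeries.X * Sser q) ^ q =
        ((PowerSeries.X * Spart q M) - (PowerSeries.X * Sser q)) ^ q := by
      rw [hq, sub_pow_char_pow]
    rw [hsub, ← mul_sub]
    have hd : (PowerSeries.X : PowerSeries F2) ^ (Ee q M) ∣ Spart q M - Sser q := by
      have := (dvd_neg (α := PowerSeries F2)).mpr (S_approx hq2 M)
      rw [neg_sub] at this
      exact this
    have hdd : (PowerSeries.X : PowerSeries F2) ^ (Ee q M) ∣
        PowerSeries.X * (Spart q M - Sser q) := dvd_mul_of_dvd_right hd _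
    refine dvd_trans ?_ (pow_dvd_pow_of_dvd hdd q)
    rw [← pow_mul]
    exact pow_dvd_pow _ (Nat.le_mul_of_pos_right _ (by omega))
  have comb : Sser q - ((PowerSeries.X : PowerSeries F2) ^ (2*q) + (PowerSeries.X * Sser q) ^ q)
      = (Sser q - Spart q (M+1)) +
        ((PowerSeries.X * Spart q M) ^ q - (PowerSeries.X * Sser q) ^ q) := by
    rw [Spart_rec hμ hq M]
    ring
  rw [comb]
  exact dvd_add h1 h2

lemma two_eq_zero' : (2 : PowerSeries F2) = 0 := by
  have := CharP.cast_eq_zero (PowerSeries F2) 2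
  exact_mod_cast this

include hμ hq hm in
lemma sigma0 : PowerSeries.constantCoeff (R := F2) (sigmaSm m) = 0 := by
  have hq2 : 2 ≤ q := hq2' hμ hq
  rw [← PowerSeries.coeff_zero_eq_constantCoeff_apply, sigma_coeff hμ hq hm, if_neg]
  rintro (h | ⟨j, hj⟩)
  · omega
  · have := Ee_ge hq2 j
    omega

include hμ hq hm in
lemma sigma_invol : ngComp (sigmaSm m) (sigmaSm m) = PowerSeries.X := by
  have hq2 : 2 ≤ q := hq2' hμ hq
  set σ := sigmaSm m with hσdef
  have hσ0 : PowerSeries.constantCoeff (R := F2) σ = 0 := sigma0 hμ hq hm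
  have hsplit : σ = PowerSeries.X + Sser q := sigma_split hμ hq hm
  have h2q : 2 * q = 2 ^ μ := by
    rw [hq, ← pow_succ']
    congr 1
    omega
  set T := ngComp (Sser q) σ with hTdef
  -- T satisfies the same functional equation as S
  have hT : T = σ ^ (2*q) + (σ * T) ^ q := by
    rw [hTdef]
    conv_lhs => rw [FE hμ hq]
    rw [ngComp_add_left, ngComp_Xpow_left hσ0, ngComp_pow_left hσ0, ngComp_mul_left hσ0,
      ngComp_X_left hσ0]
  have hS : Sser q = σ ^ (2*q) + (σ * Sser q) ^ q := by
    have e1 : σ ^ q = PowerSeries.X ^ q + Sser q ^ q := by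
      rw [hsplit, hq, add_pow_char_pow]
    have e2 : σ ^ (2*q) = PowerSeries.X ^ (2*q) + Sser q ^ (2*q) := by
      rw [hsplit, h2q, add_pow_char_pow]
    have e3 : σ ^ (2*q) + (σ * Sser q) ^ q =
        PowerSeries.X ^ (2*q) + (PowerSeries.X * Sser q) ^ q := by
      rw [e2, mul_pow, e1, mul_pow]
      have h4 : Sser q ^ (2*q) = Sser q ^ q * Sser q ^ q := by
        rw [two_mul, pow_add]
      rw [h4]
      linear_combination (Sser q ^ q * Sser q ^ q) * two_eq_zero'
    rw [e3, ← FE hμ hq]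
  -- uniqueness
  have hTS : T = Sser q := by
    have hrel : T - Sser q = σ ^ q * (T - Sser q) ^ q := by
      have h0 : T - Sser q = (σ * T) ^ q - (σ * Sser q) ^ q := by
        conv_lhs => rw [hT, hS]
        ring
      have h1 : (σ * (T - Sser q)) ^ q = (σ * T) ^ q - (σ * Sser q) ^ q := by
        rw [mul_sub, hq, sub_pow_char_pow]
      calc T - Sser q = (σ * T) ^ q - (σ * Sser q) ^ q := h0
        _ = (σ * (T - Sser q)) ^ q := h1.symm
        _ = σ ^ q * (T - Sser q) ^ q := mul_pow σ _ q
    have hdvd : ∀ k : ℕ, (PowerSeries.X : PowerSeries F2) ^ k ∣ T - Sser q := by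
      intro k
      induction k with
      | zero => simp
      | succ k ih =>
        rw [hrel]
        have h5 : (PowerSeries.X : PowerSeries F2) ^ q ∣ σ ^ q :=
          pow_dvd_pow_of_dvd (PowerSeries.X_dvd_iff.mpr hσ0) q
        have h6 : ((PowerSeries.X : PowerSeries F2) ^ k) ^ q ∣ (T - Sser q) ^ q :=
          pow_dvd_pow_of_dvd ih q
        rw [← pow_mul] at h6
        have h7 : (PowerSeries.X : PowerSeries F2) ^ (q + k * q) ∣
            σ ^ q * (T - Sser q) ^ q := by
          rw [pow_add]
          exact mul_dvd_mul h5 h6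
        refine dvd_trans (pow_dvd_pow _ ?_) h7
        have : k * 2 ≤ k * q := Nat.mul_le_mul_left _ hq2
        omega
    apply eq_of_forall_dvd
    exact hdvd
  -- conclude
  have : ngComp σ σ = σ + T := by
    conv_lhs => rw [hsplit]
    rw [ngComp_add_left, ← hsplit, ngComp_X_left hσ0]
  rw [this, hTS, hsplit]
  linear_combination (Sser q) * two_eq_zero'

include hμ hq hm in
lemma sigma_depth_lt {i : ℕ} (hi : i < m + 1) :
    PowerSeries.coeff (R := F2) i (sigmaSm m - PowerSeries.X) = 0 := by
  have hq2 : 2 ≤ q := hq2' hμ hq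
  rw [sigma_split hμ hq hm, add_sub_cancel_left, coeff_Sser, if_neg]
  rintro ⟨j, hj⟩
  have := Ee_ge hq2 j
  omega

include hμ hq hm in
lemma sigma_depth_eq : PowerSeries.coeff (R := F2) (m + 1) (sigmaSm m - PowerSeries.X) = 1 := by
  rw [sigma_split hμ hq hm, add_sub_cancel_left, coeff_Sser, if_pos ⟨0, by rw [hm]; rfl⟩]

include hμ hq hm in
lemma sigma_card (N : ℕ) (hN : 2 ≤ N) :
    ((Finset.range (N + 1)).filter
        (fun k => PowerSeries.coeff (R := F2) k (sigmaSm m) ≠ 0)).card ≤ 1 + Nat.log 2 N := by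
  have hq2 : 2 ≤ q := hq2' hμ hq
  have hsub : (Finset.range (N + 1)).filter
      (fun k => PowerSeries.coeff (R := F2) k (sigmaSm m) ≠ 0) ⊆
      insert 1 ((Finset.range (Nat.log 2 N)).image (Ee q)) := by
    intro k hk
    rw [Finset.mem_filter, Finset.mem_range] at hk
    obtain ⟨hkN, hkc⟩ := hk
    rw [sigma_coeff hμ hq hm] at hkc
    have hcond : k = 1 ∨ ∃ j : ℕ, k = Ee q j := by
      by_contra h
      rw [if_neg h] at hkc
      exact hkc rfl
    rw [Finset.mem_insert]
    rcases hcond with h | ⟨j, hj⟩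
    · exact Or.inl h
    · right
      rw [Finset.mem_image]
      refine ⟨j, ?_, hj.symm⟩
      rw [Finset.mem_range]
      have h1 : 2 ^ (j + 2) ≤ N := le_trans (le_trans (Ee_lb hq2 j) (le_of_eq hj.symm))
        (by omega)
      have h2 : j + 2 ≤ Nat.log 2 N := (Nat.le_log_iff_pow_le (by omega) (by omega)).mpr h1
      omega
  calc ((Finset.range (N + 1)).filter
      (fun k => PowerSeries.coeff (R := F2) k (sigmaSm m) ≠ 0)).card
      ≤ (insert 1 ((Finset.range (Nat.log 2 N)).image (Ee q))).card :=
        Finset.card_le_card hsub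
    _ ≤ ((Finset.range (Nat.log 2 N)).image (Ee q)).card + 1 := Finset.card_insert_le _ _
    _ ≤ (Finset.range (Nat.log 2 N)).card + 1 := by
        have := Finset.card_image_le (s := Finset.range (Nat.log 2 N)) (f := Ee q)
        omega
    _ = 1 + Nat.log 2 N := by rw [Finset.card_range]; omega
end Sigma

end NGaux

theorem statement14 (μ m : ℕ) (hμ : 2 ≤ μ) (hm : m = 2 ^ μ - 1) :
    IsNott (sigmaSm m) ∧ ngComp (sigmaSm m) (sigmaSm m) = PowerSeries.X ∧
    sigmaSm m ≠ PowerSeries.X ∧ HasDepth (sigmaSm m) m ∧ IsSparse 1 (sigmaSm m) ∧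
    ∀ σ : PowerSeries F2, IsNott σ → ngComp σ σ = PowerSeries.X → σ ≠ PowerSeries.X →
      HasDepth σ m → NGConj σ (sigmaSm m) := by
  have hpow : 4 ≤ 2 ^ μ := by
    calc (4 : ℕ) = 2 ^ 2 := rfl
    _ ≤ 2 ^ μ := Nat.pow_le_pow_right (by omega) hμ
  have hq : (2 ^ (μ - 1) : ℕ) = 2 ^ (μ - 1) := rfl
  set q : ℕ := 2 ^ (μ - 1) with hqdef
  have hm2 : m + 1 = 2 ^ μ := by omega
  have hmq : m + 1 = 2 * q := by
    rw [hm2, hqdef, ← pow_succ']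
    congr 1
    omega
  have hq2 : 2 ≤ q := NGaux.hq2' hμ hq
  have hm1 : 1 ≤ m := by omega
  have hoddm : ¬ Even m := by
    rintro ⟨a, ha⟩
    omega
  have hτN : IsNott (sigmaSm m) := by
    constructor
    · rw [PowerSeries.coeff_zero_eq_constantCoeff_apply]
      exact NGaux.sigma0 hμ hq hmq
    · rw [NGaux.sigma_coeff hμ hq hmq 1, if_pos (Or.inl rfl)]
  have hinv := NGaux.sigma_invol hμ hq hmq
  have hdepth : HasDepth (sigmaSm m) m :=
    ⟨fun i hi => NGaux.sigma_depth_lt hμ hq hmq hi, by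
      rw [NGaux.sigma_depth_eq hμ hq hmq]; exact one_ne_zero⟩
  refine ⟨hτN, hinv, ?_, hdepth, ?_, ?_⟩
  · intro h
    have h1 := NGaux.sigma_depth_eq hμ hq hmq
    rw [h, sub_self, map_zero] at h1
    exact one_ne_zero h1.symm
  · refine ⟨2 / Real.log 2, by positivity, ?_⟩
    intro N hN
    have hcard := NGaux.sigma_card hμ hq hmq N hN
    have hlog1 : (1 : ℝ) ≤ Real.logb 2 N := by
      rw [show (1 : ℝ) = Real.logb 2 2 from (Real.logb_self_eq_one (by norm_num)).symm]
      exact Real.logb_le_logb_of_le (by norm_num) (by norm_num) (by exact_mod_cast hN)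
    have hlog2 : (Nat.log 2 N : ℝ) ≤ Real.logb 2 N := Real.natLog_le_logb N 2
    have hcard' : (((Finset.range (N + 1)).filter
        fun k => PowerSeries.coeff (R := F2) k (sigmaSm m) ≠ 0).card : ℝ) ≤
        1 + (Nat.log 2 N : ℝ) := by exact_mod_cast hcard
    have hfinal : (1 : ℝ) + (Nat.log 2 N : ℝ) ≤ 2 * Real.logb 2 N := by linarith
    rw [pow_one]
    calc (((Finset.range (N + 1)).filter
        fun k => PowerSeries.coeff (R := F2) k (sigmaSm m) ≠ 0).card : ℝ)
        ≤ 2 * Real.logb 2 N := le_trans hcard' hfinal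
      _ = 2 / Real.log 2 * Real.log N := by
          rw [← Real.log_div_log]
          ring
  · intro σ hσN hσinv hσne hσdepth
    have hs1 : PowerSeries.coeff (R := F2) (m + 1) (σ - PowerSeries.X) = 1 :=
      NGaux.z2 hσdepth.2
    have hsd : (PowerSeries.X : PowerSeries F2) ^ (m + 1) ∣ σ - PowerSeries.X :=
      NGaux.dvd_iff_coeff.mpr fun k hk => hσdepth.1 k hk
    have hud : (PowerSeries.X : PowerSeries F2) ^ (m + 1) ∣ sigmaSm m - PowerSeries.X :=
      NGaux.dvd_iff_coeff.mpr fun k hk => hdepth.1 k hk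
    have hu1 : PowerSeries.coeff (R := F2) (m + 1) (sigmaSm m - PowerSeries.X) = 1 :=
      NGaux.sigma_depth_eq hμ hq hmq
    exact NGaux.conjugacy hm2 hm1 hoddm hσN hτN hσinv hinv hsd hud hs1 hu1
end
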